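/- arXiv:1108.5437 — 3 statements merged into one kernel-verified Lean document; each statement's English description precedes it below -/
import Mathlib

section
/- Assume hypothesis (*). Set U_j = Σ_{ℓ>j} R_ℓ, so that R′_1(z) = (z−1)^{−1}(R′(z) − R′(1)) = Σ_{j=0}^{k−1} U_j z^j, and R̃′(z) = R′_1(z) − R′_1(1). Then: (a) for every r ∈ [0,1] there is C = C(r) > 0 (independent of k, a, b) such that ‖R′_1(e^{a+ib}) − R′_1(e^{ib})‖ ≤ C a^r S_r(k,a) for all a > 0, b ∈ [0,2π], k ≥ 1; (b) there is C′ > 0 (depending only on Σ_j ‖U_j‖) such that ‖R′_1(z)‖ ≤ C′ (1 + a^r S_r(k,a)) for all r ∈ [0,1], a > 0, k ≥ 1 and all z with |z| ≤ e^a; (c) for every r ∈ [0,1] and every ε > 0 there exist δ > 0 and k₀ ≥ 1 such that ‖R̃′(z)‖ ≤ ε + C a^r S_r(k,a) for all k ≥ k₀, all a > 0, and all z ∈ D_a ∩ B_δ(1), where C = C(r) is the constant from (a). -/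
noncomputable section

open MeasureTheory Filter Set Metric
open scoped Topology ENNReal NNReal

variable {B : Type} [NormedAddCommGroup B] [NormedSpace ℂ B] [CompleteSpace B]

/-- `R(z) = ∑_{n≥1} Rₙ zⁿ` (here `R₀ = 0` is assumed throughout). -/
def Rcal (Rn : ℕ → B →L[ℂ] B) (z : ℂ) : B →L[ℂ] B :=
  ∑' n : ℕ, z ^ n • Rn n

/-- tail sum `U_j = ∑_{ℓ>j} R_ℓ`. -/
def Utail (Rn : ℕ → B →L[ℂ] B) (j : ℕ) : B →L[ℂ] B :=
  ∑' ℓ : ℕ, Rn (j + 1 + ℓ)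

/-- the truncated operators `R'_n` corresponding to `φ' = min (φ, k)`:
`R'_n = R_n` for `n < k`, `R'_k = ∑_{j≥k} R_j`, and `R'_n = 0` for `n > k`. -/
def Rntr (Rn : ℕ → B →L[ℂ] B) (k n : ℕ) : B →L[ℂ] B :=
  if n < k then Rn n else if n = k then ∑' ℓ : ℕ, Rn (k + ℓ) else 0

/-- the truncated series `R'(z) = ∑_{n=1}^{k} zⁿ R'_n`. -/
def Rcaltr (Rn : ℕ → B →L[ℂ] B) (k : ℕ) (z : ℂ) : B →L[ℂ] B :=
  ∑ n ∈ Finset.range (k + 1), z ^ n • Rntr Rn k n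

/-- `S_q(k,a) = ∑_{j=1}^{k} (∑_{ℓ>j} ‖R_ℓ‖) j^q e^{j a}`. -/
def Sq (Rn : ℕ → B →L[ℂ] B) (q : ℝ) (k : ℕ) (a : ℝ) : ℝ :=
  ∑ j ∈ Finset.Icc 1 k, (∑' ℓ : ℕ, ‖Rn (j + 1 + ℓ)‖) * (j : ℝ) ^ q * Real.exp ((j : ℝ) * a)

/-- `R'_1(z) = (z-1)⁻¹ (R'(z) - R'(1)) = ∑_{j=0}^{k-1} U_j z^j`. -/
def R1tr (Rn : ℕ → B →L[ℂ] B) (k : ℕ) (z : ℂ) : B →L[ℂ] B :=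
  ∑ j ∈ Finset.range k, z ^ j • Utail Rn j

/-- `R̃'(z) = R'_1(z) - R'_1(1)`. -/
def Rttr (Rn : ℕ → B →L[ℂ] B) (k : ℕ) (z : ℂ) : B →L[ℂ] B :=
  R1tr Rn k z - R1tr Rn k 1

/-- key elementary inequality: `e^x - 1 ≤ x^r e^x` for `x > 0`, `0 ≤ r ≤ 1`. -/
lemma aux_exp_sub_one_le {r x : ℝ} (hr0 : 0 ≤ r) (hr1 : r ≤ 1) (hx : 0 < x) :
    Real.exp x - 1 ≤ x ^ r * Real.exp x := by
  rcases le_total x 1 with h | h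
  · have h2 : x ^ (1:ℝ) ≤ x ^ r := Real.rpow_le_rpow_of_exponent_ge hx h hr1
    rw [Real.rpow_one] at h2
    have h4 := Real.add_one_le_exp (-x)
    have h5 : Real.exp (-x) * Real.exp x = 1 := by rw [← Real.exp_add]; simp
    nlinarith [Real.exp_pos x, Real.exp_pos (-x)]
  · have h2 : (1:ℝ) ≤ x ^ r := by
      have := Real.rpow_le_rpow_of_exponent_le h hr0
      simpa using this
    nlinarith [Real.exp_pos x]

set_option maxHeartbeats 1000000 in
/-- Proposition 3.4.  Assume (*).  With `U_j = ∑_{ℓ>j} R_ℓ`, one has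
`R'_1(z) = (z-1)⁻¹ (R'(z) - R'(1)) = ∑_{j=0}^{k-1} U_j z^j`, and
(a) for every `r ∈ [0,1]` there is `C = C(r) > 0` with
`‖R'_1(e^{a+ib}) - R'_1(e^{ib})‖ ≤ C a^r S_r(k,a)` for all `a > 0`, `b ∈ [0,2π]`, `k ≥ 1`;
(b) there is `C' > 0` with `‖R'_1(z)‖ ≤ C'(1 + a^r S_r(k,a))` for all `r ∈ [0,1]`, `a > 0`,
`k ≥ 1`, `|z| ≤ e^a`;
(c) for every `ε > 0` there are `δ > 0`, `k₀ ≥ 1` with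
`‖R̃'(z)‖ ≤ ε + C a^r S_r(k,a)` for all `k ≥ k₀`, `a > 0`, `z ∈ D_a ∩ B_δ(1)`,
where `C` is the constant from (a). -/
theorem stmt_9
    {Y : Type} [MeasurableSpace Y] (μ : Measure Y) [IsProbabilityMeasure μ]
    (F : Y → Y) (hFerg : Ergodic F μ)
    (φ : Y → ℕ) (hφmeas : Measurable φ) (hφ1 : ∀ y, 1 ≤ φ y)
    (hφint : Integrable (fun y => (φ y : ℝ)) μ)
    {B : Type} [NormedAddCommGroup B] [NormedSpace ℂ B] [CompleteSpace B]
    (ι : B →L[ℂ] Lp ℂ 1 μ) (hι : ∀ b : B, ‖ι b‖ ≤ ‖b‖)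
    (hιinj : Function.Injective fun b : B => ι b)
    (one : B) (hone : ⇑(ι one) =ᵐ[μ] fun _ => (1 : ℂ))
    (R : Lp ℂ 1 μ →L[ℂ] Lp ℂ 1 μ)
    (hR : ∀ (v : Lp ℂ 1 μ) (w : Y → ℂ), Measurable w → (∃ c, ∀ y, ‖w y‖ ≤ c) →
      ∫ y, (R v : Y → ℂ) y * w y ∂μ = ∫ y, (v : Y → ℂ) y * w (F y) ∂μ)
    (Rn : ℕ → B →L[ℂ] B) (hRn0 : Rn 0 = 0)
    (hRnR : ∀ n : ℕ, 1 ≤ n → ∀ b : B, ∀ g : Lp ℂ 1 μ,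
      ⇑g =ᵐ[μ] {y | φ y = n}.indicator ⇑(ι b) →
      ⇑(ι (Rn n b)) =ᵐ[μ] ⇑(R g))
    (hsum : Summable fun j : ℕ => ‖Rn j‖)
    (hstar : Summable fun n : ℕ => ∑' j : ℕ, ‖Rn (n + 1 + j)‖)
 :
    (∀ k : ℕ, 1 ≤ k → ∀ z : ℂ, z ≠ 1 →
        (z - 1)⁻¹ • (Rcaltr Rn k z - Rcaltr Rn k 1) = R1tr Rn k z) ∧
    (∀ r : ℝ, 0 ≤ r → r ≤ 1 →
      ∃ C : ℝ, 0 < C ∧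
        ((∀ a b : ℝ, 0 < a → b ∈ Set.Icc (0 : ℝ) (2 * Real.pi) → ∀ k : ℕ, 1 ≤ k →
            ‖R1tr Rn k (Complex.exp (a + b * Complex.I)) -
                R1tr Rn k (Complex.exp (b * Complex.I))‖ ≤ C * a ^ r * Sq Rn r k a) ∧
          (∀ ε : ℝ, 0 < ε →
            ∃ δ : ℝ, 0 < δ ∧ ∃ k₀ : ℕ, 1 ≤ k₀ ∧
              ∀ k, k₀ ≤ k → ∀ a : ℝ, 0 < a → ∀ z : ℂ,
                ‖z‖ < Real.exp a → ‖z - 1‖ < δ →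
                ‖Rttr Rn k z‖ ≤ ε + C * a ^ r * Sq Rn r k a))) ∧
    (∃ C' : ℝ, 0 < C' ∧
      ∀ r : ℝ, 0 ≤ r → r ≤ 1 → ∀ a : ℝ, 0 < a → ∀ k : ℕ, 1 ≤ k → ∀ z : ℂ,
        ‖z‖ ≤ Real.exp a →
        ‖R1tr Rn k z‖ ≤ C' * (1 + a ^ r * Sq Rn r k a)) := by
  classical
  -- the tail norms
  set u : ℕ → ℝ := fun j => ∑' ℓ : ℕ, ‖Rn (j + 1 + ℓ)‖ with hu_def
  have hu0 : ∀ j, 0 ≤ u j := fun j => tsum_nonneg fun _ => norm_nonneg _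
  have hsum_shift : ∀ m : ℕ, Summable fun ℓ : ℕ => ‖Rn (m + ℓ)‖ := by
    intro m
    have h1 : Summable fun n : ℕ => ‖Rn (n + m)‖ := (summable_nat_add_iff m).2 hsum
    exact h1.congr fun n => by rw [add_comm]
  have husum : Summable u := hstar
  have hUle : ∀ j, ‖Utail Rn j‖ ≤ u j := fun j =>
    norm_tsum_le_tsum_norm (hsum_shift (j + 1))
  -- Sq expressed via u
  have hSq : ∀ (r : ℝ) (k : ℕ) (a : ℝ),
      Sq Rn r k a = ∑ j ∈ Finset.Icc 1 k, u j * (j : ℝ) ^ r * Real.exp ((j : ℝ) * a) := by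
    intro r k a; rfl
  have hSq_nonneg : ∀ (r : ℝ) (k : ℕ) (a : ℝ), 0 ≤ r → 0 ≤ Sq Rn r k a := by
    intro r k a hr
    rw [hSq]
    refine Finset.sum_nonneg fun j _ => ?_
    have h1 := Real.rpow_nonneg (Nat.cast_nonneg j : (0:ℝ) ≤ j) r
    have h2 := hu0 j
    have h3 := (Real.exp_pos ((j:ℝ) * a)).le
    positivity
  -- generic comparison with Sq
  have sum_to_Sq : ∀ (C0 r a : ℝ) (k : ℕ), 0 ≤ C0 → 0 ≤ r → 0 < a → 1 ≤ k →
      ∀ f : ℕ → ℝ, f 0 ≤ 0 →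
      (∀ j : ℕ, 1 ≤ j → f j ≤ C0 * (a ^ r * (u j * (j : ℝ) ^ r * Real.exp ((j : ℝ) * a)))) →
      ∑ j ∈ Finset.range k, f j ≤ C0 * (a ^ r * Sq Rn r k a) := by
    intro C0 r a k hC0 hr ha hk f hf0 hf
    have harp : (0:ℝ) ≤ a ^ r := Real.rpow_nonneg ha.le r
    have hterm : ∀ j : ℕ, (0:ℝ) ≤ u j * (j : ℝ) ^ r * Real.exp ((j : ℝ) * a) := by
      intro j
      have h1 := hu0 j
      have h2 := Real.rpow_nonneg (Nat.cast_nonneg j : (0:ℝ) ≤ j) r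
      positivity
    rw [hSq, Finset.mul_sum, Finset.mul_sum]
    have hsplit : ∑ j ∈ Finset.range k, f j
        = f 0 + ∑ j ∈ Finset.Ico 1 k, f j := by
      rw [Finset.range_eq_Ico, Finset.sum_eq_sum_Ico_succ_bot (by omega : 0 < k)]
    rw [hsplit]
    have h1 : ∑ j ∈ Finset.Ico 1 k, f j
        ≤ ∑ j ∈ Finset.Ico 1 k, C0 * (a ^ r * (u j * (j:ℝ) ^ r * Real.exp ((j:ℝ) * a))) :=
      Finset.sum_le_sum fun j hj => hf j (Finset.mem_Ico.1 hj).1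
    have h2 : ∑ j ∈ Finset.Ico 1 k, C0 * (a ^ r * (u j * (j:ℝ) ^ r * Real.exp ((j:ℝ) * a)))
        ≤ ∑ j ∈ Finset.Icc 1 k, C0 * (a ^ r * (u j * (j:ℝ) ^ r * Real.exp ((j:ℝ) * a))) := by
      refine Finset.sum_le_sum_of_subset_of_nonneg ?_ fun j _ _ => ?_
      · intro x hx
        simp only [Finset.mem_Ico, Finset.mem_Icc] at hx ⊢
        omega
      · exact mul_nonneg hC0 (mul_nonneg harp (hterm j))
    linarith [h1, h2]
  -- norm bound for sums of the form ∑ w j • U j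
  have norm_sum_le' : ∀ (k : ℕ) (w : ℕ → ℂ),
      ‖∑ j ∈ Finset.range k, w j • Utail Rn j‖ ≤ ∑ j ∈ Finset.range k, ‖w j‖ * u j := by
    intro k w
    calc ‖∑ j ∈ Finset.range k, w j • Utail Rn j‖
        ≤ ∑ j ∈ Finset.range k, ‖w j • Utail Rn j‖ := norm_sum_le _ _
      _ ≤ ∑ j ∈ Finset.range k, ‖w j‖ * u j := by
          refine Finset.sum_le_sum fun j _ => ?_
          calc ‖w j • Utail Rn j‖ = ‖w j‖ * ‖Utail Rn j‖ := norm_smul (w j) (Utail Rn j)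
            _ ≤ ‖w j‖ * u j := mul_le_mul_of_nonneg_left (hUle j) (norm_nonneg _)
  -- difference of R1tr at two points
  have hdiff_gen : ∀ (k : ℕ) (z w : ℂ), R1tr Rn k z - R1tr Rn k w
      = ∑ j ∈ Finset.range k, (z ^ j - w ^ j) • Utail Rn j := by
    intro k z w
    rw [R1tr, R1tr, ← Finset.sum_sub_distrib]
    exact Finset.sum_congr rfl fun j _ => (sub_smul _ _ _).symm
  refine ⟨?_, ?_, ?_⟩
  · -- part 0 : the algebraic identity
    intro k hk z hz
    have hU : ∀ j, j < k → ∑ n ∈ Finset.Ico (j + 1) (k + 1), Rntr Rn k n = Utail Rn j := by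
      intro j hj
      rw [Finset.sum_Ico_succ_top (by omega : j + 1 ≤ k)]
      have h1 : ∀ n ∈ Finset.Ico (j + 1) k, Rntr Rn k n = Rn n := fun n hn => by
        rw [Rntr, if_pos (Finset.mem_Ico.1 hn).2]
      have h2 : Rntr Rn k k = ∑' ℓ : ℕ, Rn (k + ℓ) := by
        rw [Rntr]; simp
      rw [Finset.sum_congr rfl h1, h2]
      have hsummable : Summable fun ℓ : ℕ => Rn (j + 1 + ℓ) :=
        Summable.of_norm (hsum_shift (j + 1))
      have h3 := Summable.sum_add_tsum_nat_add (f := fun ℓ => Rn (j + 1 + ℓ)) (k - (j + 1)) hsummable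
      rw [Utail, ← h3]
      congr 1
      · rw [Finset.sum_Ico_eq_sum_range]
      · refine tsum_congr fun i => ?_
        congr 1
        omega
    have key : Rcaltr Rn k z - Rcaltr Rn k 1 = (z - 1) • R1tr Rn k z := by
      have e1 : Rcaltr Rn k z - Rcaltr Rn k 1
          = ∑ n ∈ Finset.range (k + 1), (z ^ n - 1) • Rntr Rn k n := by
        rw [Rcaltr, Rcaltr, ← Finset.sum_sub_distrib]
        refine Finset.sum_congr rfl fun n _ => ?_
        rw [one_pow, sub_smul]
      have e2 : ∀ n : ℕ, (z ^ n - 1) • Rntr Rn k n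
          = ∑ j ∈ Finset.range n, (z - 1) • (z ^ j • Rntr Rn k n) := by
        intro n
        have h1 : ∑ j ∈ Finset.range n, (z - 1) • (z ^ j • Rntr Rn k n)
            = (∑ j ∈ Finset.range n, (z - 1) * z ^ j) • Rntr Rn k n := by
          rw [Finset.sum_smul]
          exact Finset.sum_congr rfl fun j _ => smul_smul _ _ _
        rw [h1]
        congr 1
        calc z ^ n - 1 = (∑ i ∈ Finset.range n, z ^ i) * (z - 1) := (geom_sum_mul z n).symm
          _ = ∑ j ∈ Finset.range n, (z - 1) * z ^ j := by
              rw [Finset.sum_mul]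
              exact Finset.sum_congr rfl fun j _ => mul_comm _ _
      rw [e1]
      have e3 : ∑ n ∈ Finset.range (k + 1), (z ^ n - 1) • Rntr Rn k n
          = ∑ j ∈ Finset.range (k + 1), ∑ n ∈ Finset.Ico (j + 1) (k + 1),
            (z - 1) • (z ^ j • Rntr Rn k n) := by
        calc ∑ n ∈ Finset.range (k + 1), (z ^ n - 1) • Rntr Rn k n
            = ∑ n ∈ Finset.range (k + 1), ∑ j ∈ Finset.range n,
              (z - 1) • (z ^ j • Rntr Rn k n) := Finset.sum_congr rfl fun n _ => e2 n
          _ = ∑ j ∈ Finset.range (k + 1), ∑ n ∈ Finset.Ico (j + 1) (k + 1),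
              (z - 1) • (z ^ j • Rntr Rn k n) := by
                simpa only [Finset.range_eq_Ico] using
                  (Finset.sum_Ico_Ico_comm' 0 (k + 1)
                    (fun j n => (z - 1) • (z ^ j • Rntr Rn k n))).symm
      rw [e3, R1tr, Finset.smul_sum, Finset.sum_range_succ]
      have e4 : ∑ n ∈ Finset.Ico (k + 1) (k + 1), (z - 1) • (z ^ k • Rntr Rn k n) = 0 := by
        simp
      rw [e4, add_zero]
      refine Finset.sum_congr rfl fun j hj => ?_
      have hjk : j < k := Finset.mem_range.1 hj
      rw [← Finset.smul_sum, ← Finset.smul_sum, hU j hjk]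
    rw [key, smul_smul, inv_mul_cancel₀ (sub_ne_zero.2 hz), one_smul]
  · -- parts (a) and (c)
    intro r hr0 hr1
    refine ⟨3, by norm_num, ?_, ?_⟩
    · -- (a)
      intro a b ha hb k hk
      rw [hdiff_gen]
      refine le_trans (norm_sum_le' k _) ?_
      have hnorm : ∀ j : ℕ,
          ‖Complex.exp (↑a + ↑b * Complex.I) ^ j - Complex.exp (↑b * Complex.I) ^ j‖
            = Real.exp ((j : ℝ) * a) - 1 := by
        intro j
        rw [← Complex.exp_nat_mul, ← Complex.exp_nat_mul]
        have h3 : (j : ℂ) * (↑a + ↑b * Complex.I)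
            = ((( j : ℝ) * a : ℝ) : ℂ) + (j : ℂ) * (↑b * Complex.I) := by
          push_cast; ring
        rw [h3, Complex.exp_add, ← sub_one_mul, norm_mul]
        have h4 : ‖Complex.exp ((j : ℂ) * (↑b * Complex.I))‖ = 1 := by
          rw [Complex.norm_exp]
          simp
        have h5 : Complex.exp ((((j : ℝ) * a : ℝ)) : ℂ) = ((Real.exp ((j:ℝ) * a) : ℝ) : ℂ) := by
          rw [Complex.ofReal_exp]
        rw [h4, mul_one, h5]
        have h6 : ((Real.exp ((j:ℝ) * a) : ℝ) : ℂ) - 1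
            = ((Real.exp ((j:ℝ) * a) - 1 : ℝ) : ℂ) := by push_cast; ring
        rw [h6, Complex.norm_real, Real.norm_eq_abs, abs_of_nonneg]
        have : (0:ℝ) ≤ (j : ℝ) * a := mul_nonneg (Nat.cast_nonneg j) ha.le
        nlinarith [Real.one_le_exp this]
      have hfin := sum_to_Sq 3 r a k (by norm_num) hr0 ha hk
        (fun j => ‖Complex.exp (↑a + ↑b * Complex.I) ^ j
          - Complex.exp (↑b * Complex.I) ^ j‖ * u j) ?_ ?_
      · calc _ ≤ 3 * (a ^ r * Sq Rn r k a) := hfin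
          _ = 3 * a ^ r * Sq Rn r k a := by ring
      · simp
      · intro j hj
        have hjpos : (0:ℝ) < (j:ℝ) := by exact_mod_cast hj
        have hja : 0 < (j:ℝ) * a := mul_pos hjpos ha
        have h5 := aux_exp_sub_one_le hr0 hr1 hja
        have h6 : ((j:ℝ) * a) ^ r = (j:ℝ) ^ r * a ^ r :=
          Real.mul_rpow (Nat.cast_nonneg j) ha.le
        rw [h6] at h5
        simp only [hnorm j]
        have h7 : (Real.exp ((j:ℝ)*a) - 1) * u j
            ≤ ((j:ℝ) ^ r * a ^ r * Real.exp ((j:ℝ)*a)) * u j :=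
          mul_le_mul_of_nonneg_right h5 (hu0 j)
        have h8 : ((j:ℝ) ^ r * a ^ r * Real.exp ((j:ℝ)*a)) * u j
            = a ^ r * (u j * (j:ℝ) ^ r * Real.exp ((j:ℝ)*a)) := by ring
        have h9 : (0:ℝ) ≤ a ^ r * (u j * (j:ℝ) ^ r * Real.exp ((j:ℝ)*a)) := by
          have := hu0 j
          have := Real.rpow_nonneg ha.le r
          have := Real.rpow_nonneg (Nat.cast_nonneg j : (0:ℝ) ≤ j) r
          positivity
        nlinarith [h7, h8 ▸ h7]
    · -- (c)
      intro ε hε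
      set T := ∑' j, u j with hT_def
      have hT : 0 ≤ T := tsum_nonneg hu0
      have he1 : (1:ℝ) ≤ Real.exp 1 := Real.one_le_exp zero_le_one
      have hepos : (0:ℝ) < Real.exp 1 := Real.exp_pos 1
      obtain ⟨m, hm⟩ : ∃ m : ℕ, ∑' i : ℕ, u (i + m) < ε / (4 * Real.exp 1) := by
        have h := (tendsto_sum_nat_add u).eventually
          (gt_mem_nhds (show (0:ℝ) < ε / (4 * Real.exp 1) by positivity))
        exact h.exists
      set δ := ε / (2 * Real.exp 1 * ((m:ℝ) + 1) * (T + 1)) with hδ_def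
      have hδpos : 0 < δ := by
        rw [hδ_def]; positivity
      set c1 := Real.exp 1 * ((m:ℝ) + 1) * δ with hc1_def
      set c2 := 2 * Real.exp 1 with hc2_def
      have hc1nonneg : 0 ≤ c1 := by rw [hc1_def]; positivity
      have hc2nonneg : 0 ≤ c2 := by rw [hc2_def]; positivity
      have hc1T : c1 * T ≤ ε / 2 := by
        have hc1eq : c1 = ε / (2 * (T + 1)) := by
          rw [hc1_def, hδ_def, hc2_def]
          field_simp
        rw [hc1eq, div_mul_eq_mul_div, div_le_iff₀ (by positivity)]
        nlinarith
      have hc2tail : c2 * (∑' i : ℕ, u (i + m)) ≤ ε / 2 := by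
        have h0 : 0 ≤ ∑' i : ℕ, u (i + m) := tsum_nonneg fun i => hu0 _
        rw [hc2_def]
        rw [lt_div_iff₀ (by positivity : (0:ℝ) < 4 * Real.exp 1)] at hm
        nlinarith
      refine ⟨δ, hδpos, 1, le_refl 1, ?_⟩
      intro k hk a ha z hzn hzδ
      set E : ℕ → ℝ := fun j => (if j < m then c1 else c2) * u j with hE_def
      have hE0 : ∀ j, 0 ≤ E j := fun j =>
        mul_nonneg (by split <;> assumption) (hu0 j)
      -- termwise claim
      have hclaim : ∀ j : ℕ, 1 ≤ j →
          ‖z ^ j - 1‖ * u j - E j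
            ≤ 3 * (a ^ r * (u j * (j:ℝ) ^ r * Real.exp ((j:ℝ) * a))) := by
        intro j hj
        have hjpos : (0:ℝ) < (j:ℝ) := by exact_mod_cast hj
        have hja : 0 < (j:ℝ) * a := mul_pos hjpos ha
        have hEx : (0:ℝ) < Real.exp ((j:ℝ) * a) := Real.exp_pos _
        have hterm : (0:ℝ) ≤ a ^ r * (u j * (j:ℝ) ^ r * Real.exp ((j:ℝ) * a)) := by
          have := hu0 j
          have := Real.rpow_nonneg ha.le r
          have := Real.rpow_nonneg (Nat.cast_nonneg j : (0:ℝ) ≤ j) r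
          positivity
        have hzj : ‖z ^ j‖ ≤ Real.exp ((j:ℝ) * a) := by
          rw [norm_pow]
          calc ‖z‖ ^ j ≤ (Real.exp a) ^ j := pow_le_pow_left₀ (norm_nonneg z) hzn.le j
            _ = Real.exp ((j:ℝ) * a) := (Real.exp_nat_mul a j).symm
        rcases le_or_gt 1 ((j:ℝ) * a) with h1 | h1
        · -- ja ≥ 1 : absorb into the Sq term
          have hbig : ‖z ^ j - 1‖ ≤ 2 * Real.exp ((j:ℝ) * a) := by
            calc ‖z ^ j - 1‖ ≤ ‖z ^ j‖ + ‖(1:ℂ)‖ := norm_sub_le _ _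
              _ = ‖z ^ j‖ + 1 := by rw [norm_one]
              _ ≤ Real.exp ((j:ℝ)*a) + 1 := by linarith
              _ ≤ 2 * Real.exp ((j:ℝ)*a) := by nlinarith [Real.one_le_exp hja.le]
          have hja_r : 1 ≤ ((j:ℝ) * a) ^ r := by
            have := Real.rpow_le_rpow_of_exponent_le h1 hr0
            simpa using this
          have h6 : ((j:ℝ) * a) ^ r = (j:ℝ) ^ r * a ^ r :=
            Real.mul_rpow (Nat.cast_nonneg j) ha.le
          have h7 : ‖z ^ j - 1‖ * u j ≤ 2 * (((j:ℝ)*a) ^ r * Real.exp ((j:ℝ)*a)) * u j := by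
            have := mul_le_mul_of_nonneg_right hbig (hu0 j)
            nlinarith [hu0 j, mul_le_mul_of_nonneg_right
              (mul_le_mul_of_nonneg_right hja_r hEx.le) (hu0 j)]
          have h8 : 2 * (((j:ℝ)*a) ^ r * Real.exp ((j:ℝ)*a)) * u j
              = 2 * (a ^ r * (u j * (j:ℝ) ^ r * Real.exp ((j:ℝ)*a))) := by
            rw [h6]; ring
          rw [h8] at h7
          nlinarith [hE0 j, hterm]
        · -- ja < 1
          have hEa : Real.exp ((j:ℝ) * a) ≤ Real.exp 1 := Real.exp_le_exp.2 h1.le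
          rcases lt_or_ge j m with hjm | hjm
          · -- j < m : small power, use geometric sum estimate
            have hs : ‖∑ i ∈ Finset.range j, z ^ i‖ ≤ (j:ℝ) * Real.exp 1 := by
              refine le_trans (norm_sum_le _ _) ?_
              have hb : ∀ i ∈ Finset.range j, ‖z ^ i‖ ≤ Real.exp 1 := by
                intro i hi
                have hij : (i:ℝ) ≤ (j:ℝ) := by
                  exact_mod_cast (Finset.mem_range.1 hi).le
                rw [norm_pow]
                calc ‖z‖ ^ i ≤ (Real.exp a) ^ i := pow_le_pow_left₀ (norm_nonneg z) hzn.le i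
                  _ = Real.exp ((i:ℝ) * a) := (Real.exp_nat_mul a i).symm
                  _ ≤ Real.exp 1 := Real.exp_le_exp.2 (by nlinarith)
              calc ∑ i ∈ Finset.range j, ‖z ^ i‖ ≤ ∑ i ∈ Finset.range j, Real.exp 1 :=
                    Finset.sum_le_sum hb
                _ = (j:ℝ) * Real.exp 1 := by
                    rw [Finset.sum_const, Finset.card_range, nsmul_eq_mul]
            have hgeom : ‖z ^ j - 1‖ ≤ ((j:ℝ) * Real.exp 1) * ‖z - 1‖ := by
              calc ‖z ^ j - 1‖ = ‖(∑ i ∈ Finset.range j, z ^ i) * (z - 1)‖ := by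
                    rw [geom_sum_mul]
                _ = ‖∑ i ∈ Finset.range j, z ^ i‖ * ‖z - 1‖ := norm_mul _ _
                _ ≤ ((j:ℝ) * Real.exp 1) * ‖z - 1‖ :=
                    mul_le_mul_of_nonneg_right hs (norm_nonneg _)
            have hjm' : (j:ℝ) ≤ (m:ℝ) + 1 := by
              have : (j:ℝ) ≤ (m:ℝ) := by exact_mod_cast hjm.le
              linarith
            have hc : ‖z ^ j - 1‖ ≤ c1 := by
              rw [hc1_def]
              calc ‖z ^ j - 1‖ ≤ ((j:ℝ) * Real.exp 1) * ‖z - 1‖ := hgeom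
                _ ≤ ((m:ℝ) + 1) * Real.exp 1 * δ := by
                    have h01 : (0:ℝ) ≤ (j:ℝ) * Real.exp 1 := by positivity
                    have h02 : (j:ℝ) * Real.exp 1 ≤ ((m:ℝ)+1) * Real.exp 1 :=
                      mul_le_mul_of_nonneg_right hjm' hepos.le
                    nlinarith [norm_nonneg (z - 1), hzδ.le, hδpos.le]
                _ = Real.exp 1 * ((m:ℝ) + 1) * δ := by ring
            have hEj : E j = c1 * u j := by
              rw [hE_def]; simp only [if_pos hjm]
            have : ‖z ^ j - 1‖ * u j ≤ E j := by
              rw [hEj]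
              exact mul_le_mul_of_nonneg_right hc (hu0 j)
            nlinarith [hterm]
          · -- m ≤ j : use the tail bound
            have hc : ‖z ^ j - 1‖ ≤ c2 := by
              rw [hc2_def]
              calc ‖z ^ j - 1‖ ≤ ‖z ^ j‖ + ‖(1:ℂ)‖ := norm_sub_le _ _
                _ = ‖z ^ j‖ + 1 := by rw [norm_one]
                _ ≤ Real.exp ((j:ℝ)*a) + 1 := by linarith
                _ ≤ 2 * Real.exp 1 := by linarith
            have hEj : E j = c2 * u j := by
              rw [hE_def]; simp only [if_neg (by omega : ¬ j < m)]
            have : ‖z ^ j - 1‖ * u j ≤ E j := by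
              rw [hEj]
              exact mul_le_mul_of_nonneg_right hc (hu0 j)
            nlinarith [hterm]
      -- sum of the error terms
      have htail : ∑ j ∈ Finset.Ico m k, u j ≤ ∑' i : ℕ, u (i + m) := by
        rcases le_or_gt m k with h | h
        · rw [Finset.sum_Ico_eq_sum_range]
          calc ∑ i ∈ Finset.range (k - m), u (m + i)
              = ∑ i ∈ Finset.range (k - m), u (i + m) :=
                Finset.sum_congr rfl fun i _ => by rw [add_comm]
            _ ≤ ∑' i : ℕ, u (i + m) :=
                Summable.sum_le_tsum _ (fun i _ => hu0 _) ((summable_nat_add_iff m).2 husum)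
        · rw [Finset.Ico_eq_empty (by omega)]
          simpa using tsum_nonneg fun i => hu0 (i + m)
      have hTge : ∀ K : ℕ, ∑ j ∈ Finset.range K, u j ≤ T :=
        fun K => Summable.sum_le_tsum _ (fun j _ => hu0 j) husum
      have h3 : ∑ j ∈ Finset.range k, E j ≤ ε := by
        rcases le_or_gt m k with hmk | hmk
        · rw [Finset.range_eq_Ico, ← Finset.sum_Ico_consecutive _ (Nat.zero_le m) hmk]
          have hA : ∑ j ∈ Finset.Ico 0 m, E j ≤ c1 * T := by
            have he : ∀ j ∈ Finset.Ico 0 m, E j = c1 * u j := fun j hj => by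
              rw [hE_def]; simp only [if_pos (Finset.mem_Ico.1 hj).2]
            rw [Finset.sum_congr rfl he, ← Finset.mul_sum]
            refine mul_le_mul_of_nonneg_left ?_ hc1nonneg
            rw [← Finset.range_eq_Ico]
            exact hTge m
          have hB : ∑ j ∈ Finset.Ico m k, E j ≤ c2 * (∑' i : ℕ, u (i + m)) := by
            have he : ∀ j ∈ Finset.Ico m k, E j = c2 * u j := fun j hj => by
              rw [hE_def]
              simp only [if_neg (by
                have := (Finset.mem_Ico.1 hj).1; omega : ¬ j < m)]
            rw [Finset.sum_congr rfl he, ← Finset.mul_sum]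
            exact mul_le_mul_of_nonneg_left htail hc2nonneg
          linarith
        · have he : ∀ j ∈ Finset.range k, E j = c1 * u j := fun j hj => by
            rw [hE_def]
            simp only [if_pos (by
              have := Finset.mem_range.1 hj; omega : j < m)]
          rw [Finset.sum_congr rfl he, ← Finset.mul_sum]
          have := mul_le_mul_of_nonneg_left (hTge k) hc1nonneg
          linarith
      -- assemble
      have h1 : ‖Rttr Rn k z‖ ≤ ∑ j ∈ Finset.range k, ‖z ^ j - 1‖ * u j := by
        have : Rttr Rn k z = ∑ j ∈ Finset.range k, (z ^ j - 1) • Utail Rn j := by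
          rw [Rttr, hdiff_gen]
          exact Finset.sum_congr rfl fun j _ => by rw [one_pow]
        rw [this]
        exact norm_sum_le' k _
      have h2 : ∑ j ∈ Finset.range k, (‖z ^ j - 1‖ * u j - E j)
          ≤ 3 * (a ^ r * Sq Rn r k a) := by
        refine sum_to_Sq 3 r a k (by norm_num) hr0 ha hk _ ?_ hclaim
        simpa using hE0 0
      have h4 : ∑ j ∈ Finset.range k, ‖z ^ j - 1‖ * u j
          = ∑ j ∈ Finset.range k, (‖z ^ j - 1‖ * u j - E j) + ∑ j ∈ Finset.range k, E j := by
        rw [← Finset.sum_add_distrib]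
        exact Finset.sum_congr rfl fun j _ => by ring
      have : 3 * (a ^ r * Sq Rn r k a) = 3 * a ^ r * Sq Rn r k a := by ring
      linarith [h1, h2, h3, h4.le, h4.ge]
  · -- part (b)
    refine ⟨(∑' j, u j) + 1, by have h : 0 ≤ ∑' j, u j := tsum_nonneg hu0; linarith, ?_⟩
    intro r hr0 hr1 a ha k hk z hz
    set T := ∑' j, u j with hT_def
    have hT : 0 ≤ T := tsum_nonneg hu0
    have h0 : ‖R1tr Rn k z‖ ≤ ∑ j ∈ Finset.range k, ‖z ^ j‖ * u j := by
      rw [R1tr]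
      exact norm_sum_le' k _
    have h2 : ∑ j ∈ Finset.range k, u j ≤ T :=
      Summable.sum_le_tsum _ (fun j _ => hu0 j) husum
    have h3 : ∑ j ∈ Finset.range k, (‖z ^ j‖ * u j - u j) ≤ 1 * (a ^ r * Sq Rn r k a) := by
      refine sum_to_Sq 1 r a k (by norm_num) hr0 ha hk _ (by simp) ?_
      intro j hj
      have hjpos : (0:ℝ) < (j:ℝ) := by exact_mod_cast hj
      have hja : 0 < (j:ℝ) * a := mul_pos hjpos ha
      have hzj : ‖z ^ j‖ ≤ Real.exp ((j:ℝ) * a) := by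
        rw [norm_pow]
        calc ‖z‖ ^ j ≤ (Real.exp a) ^ j := pow_le_pow_left₀ (norm_nonneg z) hz j
          _ = Real.exp ((j:ℝ) * a) := (Real.exp_nat_mul a j).symm
      have h5 := aux_exp_sub_one_le hr0 hr1 hja
      have h6 : ((j:ℝ) * a) ^ r = (j:ℝ) ^ r * a ^ r :=
        Real.mul_rpow (Nat.cast_nonneg j) ha.le
      rw [h6] at h5
      have h7 : ‖z ^ j‖ * u j - u j ≤ (Real.exp ((j:ℝ)*a) - 1) * u j := by
        nlinarith [mul_le_mul_of_nonneg_right hzj (hu0 j), hu0 j]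
      have h8 : (Real.exp ((j:ℝ)*a) - 1) * u j
          ≤ ((j:ℝ) ^ r * a ^ r * Real.exp ((j:ℝ)*a)) * u j :=
        mul_le_mul_of_nonneg_right h5 (hu0 j)
      have h9 : ((j:ℝ) ^ r * a ^ r * Real.exp ((j:ℝ)*a)) * u j
          = 1 * (a ^ r * (u j * (j:ℝ) ^ r * Real.exp ((j:ℝ)*a))) := by ring
      linarith [h9 ▸ h8]
    have hsum' : ∑ j ∈ Finset.range k, ‖z ^ j‖ * u j
        = ∑ j ∈ Finset.range k, u j + ∑ j ∈ Finset.range k, (‖z ^ j‖ * u j - u j) := by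
      rw [← Finset.sum_add_distrib]
      exact Finset.sum_congr rfl fun j _ => by ring
    have hSqn : 0 ≤ Sq Rn r k a := hSq_nonneg r k a hr0
    have harp : (0:ℝ) ≤ a ^ r := Real.rpow_nonneg ha.le r
    have hend : T + 1 * (a ^ r * Sq Rn r k a) ≤ (T + 1) * (1 + a ^ r * Sq Rn r k a) := by
      nlinarith [mul_nonneg harp hSqn, mul_nonneg hT (mul_nonneg harp hSqn)]
    linarith [h0, h2, h3, hsum'.le, hsum'.ge]
end
end

section
/- There is a universal constant C > 0 with the following property. Let (Y,μ) be a probability space, F : Y → Y measure preserving, φ : Y → {1,2,…} integrable, and let (Δ, f, μ_Δ) be the tower over (Y,μ,F) with height φ. For k ≥ 1 let (Δ′, f′, μ_{Δ′}) be the truncated tower with height φ′ = min(φ,k), regarding Δ′ ⊆ Δ. Then for all v, w ∈ L∞(Δ,μ_Δ) and all k, n ≥ 1: |ρ_{v,w}(n) − ρ′_{v,w}(n)| ≤ C |v|_∞ |w|_∞ ( Σ_{j>k} μ(φ > j) + n μ(φ > k) ), where ρ_{v,w}(n) = ∫_Δ v·(w∘fⁿ) dμ_Δ − ∫_Δ v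 dμ_Δ · ∫_Δ w dμ_Δ and ρ′_{v,w}(n) = ∫_{Δ′} v·(w∘f′ⁿ) dμ_{Δ′} − ∫_{Δ′} v dμ_{Δ′} · ∫_{Δ′} w dμ_{Δ′} (v, w restricted to Δ′). -/
noncomputable section

open MeasureTheory Filter Set
open scoped Topology ENNReal NNReal

universe u

variable {Y : Type u} [MeasurableSpace Y]

/-- The tower map `f : Δ → Δ`, `f(y,ℓ) = (y,ℓ+1)` for `ℓ ≤ φ(y)-2` and
`f(y,φ(y)-1) = (F y, 0)`, on the tower `Δ = {(y,ℓ) : 0 ≤ ℓ ≤ φ(y)-1}`. -/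
def towerMap (F : Y → Y) (φ : Y → ℕ) (hφ : ∀ y, 1 ≤ φ y) :
    {p : Y × ℕ // p.2 < φ p.1} → {p : Y × ℕ // p.2 < φ p.1} := fun p =>
  if h : p.1.2 + 1 < φ p.1.1 then ⟨(p.1.1, p.1.2 + 1), h⟩ else ⟨(F p.1.1, 0), hφ _⟩

/-- The truncated tower map `f' : Δ' → Δ'` (with height `φ' = min (φ, k)`), viewed as a
map of the full tower `Δ` which preserves `Δ' ⊆ Δ`. -/
def towerMapTr (F : Y → Y) (φ : Y → ℕ) (hφ : ∀ y, 1 ≤ φ y) (k : ℕ) :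
    {p : Y × ℕ // p.2 < φ p.1} → {p : Y × ℕ // p.2 < φ p.1} := fun p =>
  if h : p.1.2 + 1 < min (φ p.1.1) k then
    ⟨(p.1.1, p.1.2 + 1), lt_of_lt_of_le h (min_le_left _ _)⟩
  else ⟨(F p.1.1, 0), hφ _⟩

/-- `μ_Δ = (μ × counting)/φ̄` on the tower `Δ`. -/
def muTower (μ : Measure Y) (φ : Y → ℕ) :
    Measure {p : Y × ℕ // p.2 < φ p.1} :=
  (ENNReal.ofReal (∫ y, (φ y : ℝ) ∂μ))⁻¹ •
    Measure.comap Subtype.val (μ.prod Measure.count)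

/-- `μ_{Δ'} = (μ × counting)/φ̄'` on the truncated tower `Δ' ⊆ Δ`. -/
def muTowerTr (μ : Measure Y) (φ : Y → ℕ) (k : ℕ) :
    Measure {p : Y × ℕ // p.2 < φ p.1} :=
  (ENNReal.ofReal (∫ y, (min (φ y) k : ℝ) ∂μ))⁻¹ •
    Measure.comap Subtype.val ((μ.prod Measure.count).restrict {p | p.2 < min (φ p.1) k})

/-- the correlation function on the tower. -/
def rhoTower (μ : Measure Y) (F : Y → Y) (φ : Y → ℕ) (hφ : ∀ y, 1 ≤ φ y)
    (v w : {p : Y × ℕ // p.2 < φ p.1} → ℝ) (n : ℕ) : ℝ :=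
  ∫ x, v x * w ((towerMap F φ hφ)^[n] x) ∂muTower μ φ -
    (∫ x, v x ∂muTower μ φ) * ∫ x, w x ∂muTower μ φ

/-- the correlation function on the truncated tower. -/
def rhoTowerTr (μ : Measure Y) (F : Y → Y) (φ : Y → ℕ) (hφ : ∀ y, 1 ≤ φ y) (k : ℕ)
    (v w : {p : Y × ℕ // p.2 < φ p.1} → ℝ) (n : ℕ) : ℝ :=
  ∫ x, v x * w ((towerMapTr F φ hφ k)^[n] x) ∂muTowerTr μ φ k -
    (∫ x, v x ∂muTowerTr μ φ k) * ∫ x, w x ∂muTowerTr μ φ k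

namespace Stmt16Aux
variable {Y : Type u} [MeasurableSpace Y]

/-- ambient tower map -/
def amb (F : Y → Y) (ψ : Y → ℕ) : Y × ℕ → Y × ℕ := fun p =>
  if p.2 + 1 < ψ p.1 then (p.1, p.2 + 1) else (F p.1, 0)

lemma measurable_amb {F : Y → Y} {ψ : Y → ℕ} (hF : Measurable F) (hψ : Measurable ψ) :
    Measurable (amb F ψ) := by
  unfold amb
  apply Measurable.ite
  · exact measurableSet_lt (measurable_snd.add_const 1) (hψ.comp measurable_fst)
  · exact measurable_fst.prodMk (measurable_snd.add_const 1)
  · exact (hF.comp measurable_fst).prodMk measurable_const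

lemma prod_count_eq_sum (μ : Measure Y) [SFinite μ] :
    μ.prod Measure.count = Measure.sum (fun ℓ : ℕ => Measure.map (fun y => (y, ℓ)) μ) := by
  rw [Measure.count, Measure.prod_sum_right]
  simp_rw [Measure.prod_dirac]

lemma restrict_levels (μ : Measure Y) [SFinite μ] {ψ : Y → ℕ} (hψ : Measurable ψ) :
    (μ.prod Measure.count).restrict {p : Y × ℕ | p.2 < ψ p.1} =
      Measure.sum (fun ℓ : ℕ => Measure.map (fun y => (y, ℓ)) (μ.restrict {y | ℓ < ψ y})) := by
  have hs : MeasurableSet {p : Y × ℕ | p.2 < ψ p.1} :=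
    measurableSet_lt measurable_snd (hψ.comp measurable_fst)
  rw [prod_count_eq_sum, Measure.restrict_sum _ hs]
  congr 1
  funext ℓ
  rw [Measure.restrict_map (measurable_prodMk_right (y := ℓ)) hs]
  rfl



lemma sum_shift (c : ℕ → Measure (Y × ℕ)) :
    Measure.sum c = c 0 + Measure.sum (fun ℓ => c (ℓ + 1)) := by
  ext A hA
  rw [Measure.sum_apply _ hA, Measure.add_apply, Measure.sum_apply _ hA,
    tsum_eq_zero_add' ENNReal.summable]

lemma partition_eq (μ : Measure Y) {ψ : Y → ℕ} (hψ : Measurable ψ) (hψ1 : ∀ y, 1 ≤ ψ y) :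
    Measure.sum (fun ℓ : ℕ => μ.restrict {y | ψ y = ℓ + 1}) = μ := by
  ext A hA
  rw [Measure.sum_apply _ hA]
  simp_rw [Measure.restrict_apply hA]
  rw [← measure_iUnion]
  · congr 1
    ext y
    simp only [mem_iUnion, mem_inter_iff, mem_setOf_eq]
    constructor
    · rintro ⟨ℓ, hy, _⟩; exact hy
    · intro hy; exact ⟨ψ y - 1, hy, by have := hψ1 y; omega⟩
  · intro i j hij
    simp only [Function.onFun, disjoint_left]
    rintro y ⟨-, h1⟩ ⟨-, h2⟩
    simp only [mem_setOf_eq] at h1 h2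
    omega
  · exact fun i => hA.inter (hψ (measurableSet_singleton (i + 1)))

lemma amb_measurePreserving (μ : Measure Y) [IsProbabilityMeasure μ] {F : Y → Y}
    (hF : MeasurePreserving F μ μ) {ψ : Y → ℕ} (hψ : Measurable ψ) (hψ1 : ∀ y, 1 ≤ ψ y) :
    MeasurePreserving (amb F ψ) ((μ.prod Measure.count).restrict {p : Y × ℕ | p.2 < ψ p.1})
      ((μ.prod Measure.count).restrict {p : Y × ℕ | p.2 < ψ p.1}) := by
  have hamb : Measurable (amb F ψ) := measurable_amb hF.measurable hψ
  refine ⟨hamb, ?_⟩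
  rw [restrict_levels μ hψ]
  rw [Measure.map_sum (hamb.aemeasurable)]
  have hstep : ∀ ℓ : ℕ, Measure.map (amb F ψ)
        (Measure.map (fun y => (y, ℓ)) (μ.restrict {y | ℓ < ψ y})) =
      Measure.map (fun y => (y, ℓ + 1)) (μ.restrict {y | ℓ + 1 < ψ y}) +
        Measure.map (fun y => (F y, 0)) (μ.restrict {y | ψ y = ℓ + 1}) := by
    intro ℓ
    rw [Measure.map_map hamb (measurable_prodMk_right (y := ℓ))]
    have hmeas1 : MeasurableSet {y | ψ y = ℓ + 1} := hψ (measurableSet_singleton (ℓ + 1))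
    have hmeas2 : MeasurableSet {y | ℓ + 1 < ψ y} := hψ measurableSet_Ioi
    have hsplit : μ.restrict {y | ℓ < ψ y} =
        μ.restrict {y | ℓ + 1 < ψ y} + μ.restrict {y | ψ y = ℓ + 1} := by
      rw [← Measure.restrict_union ?_ hmeas1]
      · congr 1; ext y; simp only [mem_union, mem_setOf_eq]; omega
      · rw [disjoint_left]; intro y h1 h2; simp only [mem_setOf_eq] at h1 h2; omega
    rw [hsplit, Measure.map_add _ _ (hamb.comp (measurable_prodMk_right (y := ℓ)))]
    congr 1
    · apply Measure.map_congr
      filter_upwards [ae_restrict_mem hmeas2] with y hy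
      simp only [Function.comp_apply, amb, if_pos hy]
    · apply Measure.map_congr
      filter_upwards [ae_restrict_mem hmeas1] with y hy
      have hy' : ψ y = ℓ + 1 := hy
      simp only [Function.comp_apply, amb]
      rw [if_neg (by omega)]
  simp_rw [hstep]
  rw [← Measure.sum_add_sum]
  rw [← Measure.map_sum ((hF.measurable.prodMk measurable_const).aemeasurable),
    partition_eq μ hψ hψ1]
  have hmap0 : Measure.map (fun y => (F y, 0)) μ =
      Measure.map (fun y => (y, (0:ℕ))) (μ.restrict {y | 0 < ψ y}) := by
    have huniv : {y | 0 < ψ y} = univ := eq_univ_of_forall fun y => hψ1 y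
    rw [huniv, Measure.restrict_univ,
      show (fun y => (F y, (0:ℕ))) = (fun x => (x, (0:ℕ))) ∘ F from rfl,
      ← Measure.map_map (measurable_prodMk_right (y := 0)) hF.measurable, hF.map_eq]
  rw [hmap0, add_comm, ← sum_shift (fun ℓ => Measure.map (fun y => (y, ℓ)) (μ.restrict {y | ℓ < ψ y}))]

instance : SFinite (Measure.count : Measure ℕ) := by
  unfold Measure.count; infer_instance

lemma count_Iio (n : ℕ) : Measure.count (Set.Iio n) = n := by
  rw [← Finset.coe_range, Measure.count_apply_finset]
  simp

lemma prod_count_apply (μ : Measure Y) [SFinite μ] {ψ : Y → ℕ} (hψ : Measurable ψ) :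
    (μ.prod Measure.count) {p : Y × ℕ | p.2 < ψ p.1} = ∫⁻ y, (ψ y : ℝ≥0∞) ∂μ := by
  have hs : MeasurableSet {p : Y × ℕ | p.2 < ψ p.1} :=
    measurableSet_lt measurable_snd (hψ.comp measurable_fst)
  rw [Measure.prod_apply hs]
  congr 1
  funext y
  have : (Prod.mk y ⁻¹' {p : Y × ℕ | p.2 < ψ p.1}) = Set.Iio (ψ y) := rfl
  rw [this, count_Iio]

lemma lintegral_nat (μ : Measure Y) {ψ : Y → ℕ} (hint : Integrable (fun y => (ψ y : ℝ)) μ) :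
    ∫⁻ y, (ψ y : ℝ≥0∞) ∂μ = ENNReal.ofReal (∫ y, (ψ y : ℝ) ∂μ) := by
  rw [ofReal_integral_eq_lintegral_ofReal hint (ae_of_all _ fun y => by positivity)]
  congr 1
  funext y
  rw [ENNReal.ofReal_natCast]

/-- the tail-sum identity: `∫ (φ - min φ k) dμ = ∑_{j≥0} μ(φ > k + j)`. -/
lemma tail_sum (μ : Measure Y) [IsProbabilityMeasure μ] {φ : Y → ℕ} (hφ : Measurable φ)
    (hint : Integrable (fun y => (φ y : ℝ)) μ) (k : ℕ) :
    ENNReal.ofReal (∫ y, (φ y : ℝ) ∂μ - ∫ y, (min (φ y) k : ℝ) ∂μ) =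
      ∑' j : ℕ, μ {y | k + j < φ y} := by
  have hmin : Integrable (fun y => (min (φ y) k : ℝ)) μ := by
    apply hint.mono (((measurable_from_top.comp hφ).min measurable_const).aestronglyMeasurable)
    filter_upwards with y
    simp only [Real.norm_eq_abs, Function.comp_apply]
    have h1 : (0:ℝ) ≤ min (φ y : ℝ) (k : ℝ) := le_min (by positivity) (by positivity)
    rw [abs_of_nonneg h1, abs_of_nonneg (by positivity : (0:ℝ) ≤ (φ y : ℝ))]
    exact min_le_left _ _
  rw [← integral_sub hint hmin]
  have hre : ∀ y, (φ y : ℝ) - (min (φ y : ℝ) (k : ℝ)) = ((φ y - min (φ y) k : ℕ) : ℝ) := by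
    intro y
    rw [Nat.cast_sub (min_le_left _ _), Nat.cast_min]
  have hint2 : Integrable (fun y => ((φ y - min (φ y) k : ℕ) : ℝ)) μ := by
    have : (fun y => ((φ y - min (φ y) k : ℕ) : ℝ)) =
        fun y => (φ y : ℝ) - (min (φ y : ℝ) (k : ℝ)) := funext fun y => (hre y).symm
    rw [this]
    exact hint.sub hmin
  simp_rw [hre]
  rw [ofReal_integral_eq_lintegral_ofReal hint2 (ae_of_all _ fun y => by positivity)]
  have hpt : ∀ y, ENNReal.ofReal ((φ y - min (φ y) k : ℕ) : ℝ) =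
      ∑' j : ℕ, Set.indicator {y | k + j < φ y} (1 : Y → ℝ≥0∞) y := by
    intro y
    rw [ENNReal.ofReal_natCast]
    have hcond : ∀ j : ℕ, Set.indicator {y | k + j < φ y} (1 : Y → ℝ≥0∞) y =
        if j < φ y - min (φ y) k then 1 else 0 := by
      intro j
      rw [Set.indicator_apply]
      congr 1
      simp only [mem_setOf_eq, eq_iff_iff]
      omega
    simp_rw [hcond]
    rw [tsum_eq_sum (s := Finset.range (φ y - min (φ y) k))
      (by intro j hj; rw [if_neg]; simpa using hj)]
    rw [Finset.sum_congr rfl (fun j hj => by rw [if_pos (Finset.mem_range.mp hj)]),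
      Finset.sum_const, Finset.card_range, nsmul_eq_mul, mul_one]
  simp_rw [hpt]
  rw [lintegral_tsum (fun j => ((measurable_one.indicator
    (show MeasurableSet {y | k + j < φ y} from hφ measurableSet_Ioi)).aemeasurable))]
  congr 1
  funext j
  exact lintegral_indicator_one (show MeasurableSet {y | k + j < φ y} from hφ measurableSet_Ioi)

lemma amb_mem_tr {F : Y → Y} {φ : Y → ℕ} {k : ℕ} (hφ1 : ∀ y, 1 ≤ φ y) (hk : 1 ≤ k)
    {p : Y × ℕ} (hp : p.2 < min (φ p.1) k) :
    (amb F (fun y => min (φ y) k) p).2 < min (φ (amb F (fun y => min (φ y) k) p).1) k := by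
  simp only [amb]
  split
  · next h => exact h
  · exact lt_min (hφ1 _) hk

lemma iterate_agree {F : Y → Y} {φ : Y → ℕ} {k : ℕ} (hφ1 : ∀ y, 1 ≤ φ y) (hk : 1 ≤ k)
    {n : ℕ} {p : Y × ℕ} (hp : p.2 < min (φ p.1) k)
    (hD : ∀ i, i < n →
      (amb F (fun y => min (φ y) k))^[i] p ∉ {q : Y × ℕ | q.2 + 1 = k ∧ k < φ q.1}) :
    (amb F φ)^[n] p = (amb F (fun y => min (φ y) k))^[n] p := by
  set g := amb F (fun y => min (φ y) k) with hg
  have key : ∀ m, m ≤ n → (g^[m] p).2 < min (φ (g^[m] p).1) k ∧ (amb F φ)^[m] p = g^[m] p := by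
    intro m
    induction m with
    | zero => exact fun _ => ⟨hp, rfl⟩
    | succ m ih =>
      intro hm
      obtain ⟨hmem, heq⟩ := ih (Nat.le_of_succ_le hm)
      refine ⟨?_, ?_⟩
      · rw [Function.iterate_succ_apply']
        exact amb_mem_tr hφ1 hk hmem
      · rw [Function.iterate_succ_apply', Function.iterate_succ_apply', heq]
        have hnD := hD m (Nat.lt_of_succ_le hm)
        set q := g^[m] p with hq
        simp only [mem_setOf_eq, not_and] at hnD
        show amb F φ q = amb F (fun y => min (φ y) k) q
        simp only [amb]
        rcases lt_or_ge (q.2 + 1) (min (φ q.1) k) with h | h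
        · rw [if_pos (lt_of_lt_of_le h (min_le_left _ _)), if_pos h]
        · rw [if_neg (by omega : ¬ q.2 + 1 < min (φ q.1) k)]
          rw [if_neg ?_]
          intro hcon
          have h1 : q.2 + 1 = k := by
            have := lt_min_iff.not.mp (by omega : ¬ q.2 + 1 < min (φ q.1) k)
            have hqk : q.2 < k := lt_of_lt_of_le hmem (min_le_right _ _)
            omega
          exact hnD h1 (by omega)
  exact (key n le_rfl).2

lemma integral_comap_eq (ν : Measure (Y × ℕ)) {φ : Y → ℕ} (hφ : Measurable φ)
    (f : Y × ℕ → ℝ) :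
    ∫ x : {p : Y × ℕ // p.2 < φ p.1}, f x.val ∂(Measure.comap Subtype.val ν) =
      ∫ p in {p : Y × ℕ | p.2 < φ p.1}, f p ∂ν :=
  integral_subtype_comap (measurableSet_lt measurable_snd (hφ.comp measurable_fst)) f

lemma arith {bar bar' Mv Mw mk T nn a a' b b' P Q P' : ℝ}
    (h1' : 1 ≤ bar') (h12 : bar' ≤ bar)
    (hdelta : bar - bar' = mk + T)
    (hMv : 0 ≤ Mv) (hMw : 0 ≤ Mw) (hT : 0 ≤ T) (hmk : 0 ≤ mk) (hn : 1 ≤ nn)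
    (ha' : |a'| ≤ Mv * bar') (hb : |b| ≤ Mw * bar) (hb' : |b'| ≤ Mw * bar')
    (hP' : |P'| ≤ Mv * Mw * bar')
    (hPQ : |P - Q| ≤ Mv * Mw * (bar - bar'))
    (hQP' : |Q - P'| ≤ 2 * (Mv * Mw) * (nn * mk))
    (haa' : |a - a'| ≤ Mv * (bar - bar')) (hbb' : |b - b'| ≤ Mw * (bar - bar')) :
    |(bar⁻¹ * P - (bar⁻¹ * a) * (bar⁻¹ * b)) - (bar'⁻¹ * P' - (bar'⁻¹ * a') * (bar'⁻¹ * b'))| ≤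
      8 * Mv * Mw * (T + nn * mk) := by
  have hbar'0 : (0:ℝ) < bar' := by linarith
  have hbar0 : (0:ℝ) < bar := by linarith
  have hδ0 : (0:ℝ) ≤ bar - bar' := by linarith
  have hinv1 : bar⁻¹ ≤ 1 := by
    rw [inv_le_one_iff₀]; right; linarith
  have hinvle : bar⁻¹ ≤ bar'⁻¹ := by
    apply inv_anti₀ hbar'0 h12
  have hscale : ∀ (c M x : ℝ), 0 < c → |x| ≤ M * c → |c⁻¹ * x| ≤ M := by
    intro c M x hc hx
    rw [abs_mul, abs_inv, abs_of_pos hc]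
    calc c⁻¹ * |x| ≤ c⁻¹ * (M * c) :=
          mul_le_mul_of_nonneg_left hx (inv_nonneg.2 hc.le)
      _ = M := by field_simp
  have hkey : ∀ (x x' M E : ℝ), 0 ≤ M → |x'| ≤ M * bar' → |x - x'| ≤ E →
      |bar⁻¹ * x - bar'⁻¹ * x'| ≤ E + M * (bar - bar') := by
    intro x x' M E hM hx' hE
    have h0E : (0:ℝ) ≤ E := le_trans (abs_nonneg _) hE
    have heq : bar⁻¹ * x - bar'⁻¹ * x' = bar⁻¹ * (x - x') + (bar⁻¹ - bar'⁻¹) * x' := by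
      field_simp
      ring
    rw [heq]
    refine (abs_add_le _ _).trans (add_le_add ?_ ?_)
    · rw [abs_mul, abs_inv, abs_of_pos hbar0]
      calc bar⁻¹ * |x - x'| ≤ 1 * E :=
            mul_le_mul hinv1 hE (abs_nonneg _) zero_le_one
        _ = E := one_mul E
    · rw [abs_mul, abs_sub_comm, abs_of_nonneg (by linarith : (0:ℝ) ≤ bar'⁻¹ - bar⁻¹)]
      have hid : (bar'⁻¹ - bar⁻¹) * (M * bar') = M * ((bar - bar') * bar⁻¹) := by
        field_simp
      calc (bar'⁻¹ - bar⁻¹) * |x'| ≤ (bar'⁻¹ - bar⁻¹) * (M * bar') :=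
            mul_le_mul_of_nonneg_left hx' (by linarith)
        _ = M * ((bar - bar') * bar⁻¹) := hid
        _ ≤ M * ((bar - bar') * 1) := by
            apply mul_le_mul_of_nonneg_left _ hM
            apply mul_le_mul_of_nonneg_left hinv1 hδ0
        _ = M * (bar - bar') := by ring
  have hPP' : |P - P'| ≤ Mv * Mw * (bar - bar') + 2 * (Mv * Mw) * (nn * mk) := by
    calc |P - P'| ≤ |P - Q| + |Q - P'| := abs_sub_le _ _ _
      _ ≤ _ := add_le_add hPQ hQP'
  have hA : |bar⁻¹ * P - bar'⁻¹ * P'| ≤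
      (Mv * Mw * (bar - bar') + 2 * (Mv * Mw) * (nn * mk)) + (Mv * Mw) * (bar - bar') :=
    hkey P P' (Mv * Mw) _ (mul_nonneg hMv hMw) hP' hPP'
  have hA2 : |bar⁻¹ * a - bar'⁻¹ * a'| ≤ Mv * (bar - bar') + Mv * (bar - bar') :=
    hkey a a' Mv _ hMv ha' haa'
  have hA3 : |bar⁻¹ * b - bar'⁻¹ * b'| ≤ Mw * (bar - bar') + Mw * (bar - bar') :=
    hkey b b' Mw _ hMw hb' hbb'
  have hB2 : |bar⁻¹ * b| ≤ Mw := hscale bar Mw b hbar0 hb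
  have hB3 : |bar'⁻¹ * a'| ≤ Mv := hscale bar' Mv a' hbar'0 ha'
  have hprod : |(bar⁻¹ * a) * (bar⁻¹ * b) - (bar'⁻¹ * a') * (bar'⁻¹ * b')| ≤
      (Mv * (bar - bar') + Mv * (bar - bar')) * Mw +
        Mv * (Mw * (bar - bar') + Mw * (bar - bar')) := by
    have hid : (bar⁻¹ * a) * (bar⁻¹ * b) - (bar'⁻¹ * a') * (bar'⁻¹ * b') =
        (bar⁻¹ * a - bar'⁻¹ * a') * (bar⁻¹ * b) +
          (bar'⁻¹ * a') * (bar⁻¹ * b - bar'⁻¹ * b') := by ring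
    rw [hid]
    refine (abs_add_le _ _).trans (add_le_add ?_ ?_)
    · rw [abs_mul]
      exact mul_le_mul hA2 hB2 (abs_nonneg _) (by positivity)
    · rw [abs_mul]
      exact mul_le_mul hB3 hA3 (abs_nonneg _) hMv
  have hsplit : |(bar⁻¹ * P - (bar⁻¹ * a) * (bar⁻¹ * b)) -
      (bar'⁻¹ * P' - (bar'⁻¹ * a') * (bar'⁻¹ * b'))| ≤
      |bar⁻¹ * P - bar'⁻¹ * P'| +
        |(bar⁻¹ * a) * (bar⁻¹ * b) - (bar'⁻¹ * a') * (bar'⁻¹ * b')| := by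
    have hid : (bar⁻¹ * P - (bar⁻¹ * a) * (bar⁻¹ * b)) -
        (bar'⁻¹ * P' - (bar'⁻¹ * a') * (bar'⁻¹ * b')) =
        (bar⁻¹ * P - bar'⁻¹ * P') -
          ((bar⁻¹ * a) * (bar⁻¹ * b) - (bar'⁻¹ * a') * (bar'⁻¹ * b')) := by ring
    rw [hid]
    exact abs_sub _ _
  have hmono : Mv * Mw * mk ≤ Mv * Mw * (nn * mk) := by
    have h1 : mk ≤ nn * mk := by nlinarith
    exact mul_le_mul_of_nonneg_left h1 (mul_nonneg hMv hMw)
  have hfin : Mv * Mw * (bar - bar') ≤ Mv * Mw * T + Mv * Mw * (nn * mk) := by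
    rw [hdelta, mul_add]
    linarith
  calc |(bar⁻¹ * P - (bar⁻¹ * a) * (bar⁻¹ * b)) -
      (bar'⁻¹ * P' - (bar'⁻¹ * a') * (bar'⁻¹ * b'))| ≤ _ := hsplit
    _ ≤ ((Mv * Mw * (bar - bar') + 2 * (Mv * Mw) * (nn * mk)) + (Mv * Mw) * (bar - bar')) +
        ((Mv * (bar - bar') + Mv * (bar - bar')) * Mw +
          Mv * (Mw * (bar - bar') + Mw * (bar - bar'))) := add_le_add hA hprod
    _ = 6 * (Mv * Mw * (bar - bar')) + 2 * (Mv * Mw) * (nn * mk) := by ring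
    _ ≤ 6 * (Mv * Mw * T + Mv * Mw * (nn * mk)) + 2 * (Mv * Mw) * (nn * mk) := by linarith
    _ ≤ 8 * Mv * Mw * (T + nn * mk) := by
        have := mul_nonneg (mul_nonneg hMv hMw) hT
        linarith

lemma val_towerMap {F : Y → Y} {φ : Y → ℕ} (hφ1 : ∀ y, 1 ≤ φ y)
    (x : {p : Y × ℕ // p.2 < φ p.1}) :
    ((towerMap F φ hφ1 x : Y × ℕ)) = amb F φ (x : Y × ℕ) := by
  by_cases h : (x : Y × ℕ).2 + 1 < φ (x : Y × ℕ).1 <;> simp [towerMap, amb, h]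

lemma val_towerMapTr {F : Y → Y} {φ : Y → ℕ} (hφ1 : ∀ y, 1 ≤ φ y) (k : ℕ)
    (x : {p : Y × ℕ // p.2 < φ p.1}) :
    ((towerMapTr F φ hφ1 k x : Y × ℕ)) = amb F (fun y => min (φ y) k) (x : Y × ℕ) := by
  by_cases h : (x : Y × ℕ).2 + 1 < min (φ (x : Y × ℕ).1) k <;> simp [towerMapTr, amb, h]

lemma val_iterate_towerMap {F : Y → Y} {φ : Y → ℕ} (hφ1 : ∀ y, 1 ≤ φ y)
    (x : {p : Y × ℕ // p.2 < φ p.1}) (n : ℕ) :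
    (((towerMap F φ hφ1)^[n] x) : Y × ℕ) = (amb F φ)^[n] (x : Y × ℕ) := by
  induction n with
  | zero => rfl
  | succ n ih =>
    rw [Function.iterate_succ_apply', Function.iterate_succ_apply',
      val_towerMap hφ1, ih]

lemma val_iterate_towerMapTr {F : Y → Y} {φ : Y → ℕ} (hφ1 : ∀ y, 1 ≤ φ y) (k : ℕ)
    (x : {p : Y × ℕ // p.2 < φ p.1}) (n : ℕ) :
    (((towerMapTr F φ hφ1 k)^[n] x) : Y × ℕ) =
      (amb F (fun y => min (φ y) k))^[n] (x : Y × ℕ) := by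
  induction n with
  | zero => rfl
  | succ n ih =>
    rw [Function.iterate_succ_apply', Function.iterate_succ_apply',
      val_towerMapTr hφ1 k, ih]

set_option maxHeartbeats 1000000 in
lemma master (μ : Measure Y) [IsProbabilityMeasure μ]
    (F : Y → Y) (hF : MeasurePreserving F μ μ)
    (φ : Y → ℕ) (hφ1 : ∀ y, 1 ≤ φ y) (hφm : Measurable φ)
    (hint : Integrable (fun y => (φ y : ℝ)) μ)
    (v w : {p : Y × ℕ // p.2 < φ p.1} → ℝ) (Mv Mw : ℝ)
    (hv : Measurable v) (hw : Measurable w)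
    (hvb : ∀ x, |v x| ≤ Mv) (hwb : ∀ x, |w x| ≤ Mw)
    (k n : ℕ) (hk : 1 ≤ k) (hn : 1 ≤ n) :
    |rhoTower μ F φ hφ1 v w n - rhoTowerTr μ F φ hφ1 k v w n| ≤
      8 * Mv * Mw * ((∑' j : ℕ, (μ {y | k + 1 + j < φ y}).toReal) +
        (n : ℝ) * (μ {y | k < φ y}).toReal) := by
  -- nonemptiness and sign facts
  have hYne : Nonempty Y := by
    rcases isEmpty_or_nonempty Y with hE | hY
    · exfalso
      have h1 := measure_univ (μ := μ)
      rw [Set.univ_eq_empty_iff.mpr hE, measure_empty] at h1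
      simp at h1
    · exact hY
  obtain ⟨y0⟩ := hYne
  have hMv0 : 0 ≤ Mv := (abs_nonneg _).trans (hvb ⟨(y0, 0), hφ1 y0⟩)
  have hMw0 : 0 ≤ Mw := (abs_nonneg _).trans (hwb ⟨(y0, 0), hφ1 y0⟩)
  -- notation
  set ψ : Y → ℕ := fun y => min (φ y) k with hψdef
  set m : Measure (Y × ℕ) := μ.prod Measure.count with hm
  set s : Set (Y × ℕ) := {p | p.2 < φ p.1} with hsdef
  set s' : Set (Y × ℕ) := {p | p.2 < min (φ p.1) k} with hs'def
  have hψm : Measurable ψ := hφm.min measurable_const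
  have hψ1 : ∀ y, 1 ≤ ψ y := fun y => le_min (hφ1 y) hk
  have hs : MeasurableSet s := measurableSet_lt measurable_snd (hφm.comp measurable_fst)
  have hs' : MeasurableSet s' := measurableSet_lt measurable_snd (hψm.comp measurable_fst)
  have hss' : s' ⊆ s := by
    intro p hp
    simp only [hs'def, hsdef, mem_setOf_eq] at *
    exact lt_of_lt_of_le hp (min_le_left _ _)
  set bar := ∫ y, (φ y : ℝ) ∂μ with hbardef
  set bar' := ∫ y, (min (φ y) k : ℝ) ∂μ with hbar'def
  have hmin_int : Integrable (fun y => (min (φ y) k : ℝ)) μ := by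
    apply hint.mono (((measurable_from_top.comp hφm).min measurable_const).aestronglyMeasurable)
    filter_upwards with y
    simp only [Real.norm_eq_abs, Function.comp_apply]
    have h1 : (0:ℝ) ≤ min (φ y : ℝ) (k : ℝ) := le_min (by positivity) (by positivity)
    rw [abs_of_nonneg h1, abs_of_nonneg (by positivity : (0:ℝ) ≤ (φ y : ℝ))]
    exact min_le_left _ _
  have hone : ∫ y, (1:ℝ) ∂μ = 1 := by simp
  have hbar'1 : 1 ≤ bar' := by
    rw [← hone, hbar'def]
    apply integral_mono (integrable_const 1) hmin_int
    intro y
    have h1 : (1:ℕ) ≤ min (φ y) k := hψ1 y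
    calc (1:ℝ) ≤ ((min (φ y) k : ℕ) : ℝ) := by exact_mod_cast h1
      _ = min (φ y : ℝ) (k : ℝ) := by rw [Nat.cast_min]
  have hbarle : bar' ≤ bar := by
    rw [hbar'def, hbardef]
    apply integral_mono hmin_int hint
    intro y
    exact min_le_left _ _
  have hbar1 : 1 ≤ bar := le_trans hbar'1 hbarle
  have hms : m s = ENNReal.ofReal bar := by
    rw [hm, hsdef, prod_count_apply μ hφm, lintegral_nat μ hint]
  have hms' : m s' = ENNReal.ofReal bar' := by
    rw [hm, hs'def]
    have h1 : {p : Y × ℕ | p.2 < min (φ p.1) k} = {p : Y × ℕ | p.2 < ψ p.1} := rfl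
    rw [h1, prod_count_apply μ hψm, lintegral_nat μ (by
      have h2 : (fun y => ((ψ y : ℕ) : ℝ)) = fun y => min (φ y : ℝ) (k : ℝ) :=
        funext fun y => by simp [hψdef, Nat.cast_min]
      rw [h2]; exact hmin_int)]
    congr 1
    rw [hbar'def]
    apply integral_congr_ae
    filter_upwards with y
    simp [hψdef, Nat.cast_min]
  have hmsne : m s ≠ ∞ := by rw [hms]; exact ENNReal.ofReal_ne_top
  have hms'ne : m s' ≠ ∞ := by rw [hms']; exact ENNReal.ofReal_ne_top
  -- extended functions
  set Gv : Y × ℕ → ℝ := fun p => if h : p.2 < φ p.1 then v ⟨p, h⟩ else 0 with hGvdef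
  set Gw : Y × ℕ → ℝ := fun p => if h : p.2 < φ p.1 then w ⟨p, h⟩ else 0 with hGwdef
  have hGext : ∀ (u : {p : Y × ℕ // p.2 < φ p.1} → ℝ), Measurable u →
      Measurable (fun p : Y × ℕ => if h : p.2 < φ p.1 then u ⟨p, h⟩ else 0) := by
    intro u hu
    classical
    have h0 := Measurable.dite (s := s) (f := fun x => u x) (g := fun _ => (0:ℝ))
      hu measurable_const hs
    convert h0 using 1
    funext p; exact dite_congr rfl (fun _ => rfl) (fun _ => rfl)
  have hGvm : Measurable Gv := hGext v hv
  have hGwm : Measurable Gw := hGext w hw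
  have hGvb : ∀ p, |Gv p| ≤ Mv := by
    intro p; rw [hGvdef]; dsimp only
    split
    · exact hvb _
    · simpa using hMv0
  have hGwb : ∀ p, |Gw p| ≤ Mw := by
    intro p; rw [hGwdef]; dsimp only
    split
    · exact hwb _
    · simpa using hMw0
  have hambφ : Measurable (amb F φ) := measurable_amb hF.measurable hφm
  have hambψ : Measurable (amb F ψ) := measurable_amb hF.measurable hψm
  -- quantities
  set a := ∫ p in s, Gv p ∂m with hadef
  set b := ∫ p in s, Gw p ∂m with hbdef
  set a' := ∫ p in s', Gv p ∂m with ha'def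
  set b' := ∫ p in s', Gw p ∂m with hb'def
  set P := ∫ p in s, Gv p * Gw ((amb F φ)^[n] p) ∂m with hPdef
  set Q := ∫ p in s', Gv p * Gw ((amb F φ)^[n] p) ∂m with hQdef
  set P' := ∫ p in s', Gv p * Gw ((amb F ψ)^[n] p) ∂m with hP'def
  -- integrability helper
  have hIntOn : ∀ (t : Set (Y × ℕ)), m t ≠ ∞ → ∀ (G : Y × ℕ → ℝ) (M : ℝ),
      Measurable G → (∀ p, |G p| ≤ M) → IntegrableOn G t m := by
    intro t ht G M hGm hGb
    haveI : IsFiniteMeasure (m.restrict t) :=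
      ⟨by rwa [Measure.restrict_apply_univ, lt_top_iff_ne_top]⟩
    exact ⟨hGm.aestronglyMeasurable,
      HasFiniteIntegral.of_bounded (C := M)
        (ae_of_all _ fun p => by rw [Real.norm_eq_abs]; exact hGb p)⟩
  have hprodb : ∀ (g : Y × ℕ → Y × ℕ), ∀ p, |Gv p * Gw (g p)| ≤ Mv * Mw := by
    intro g p
    rw [abs_mul]
    exact mul_le_mul (hGvb p) (hGwb _) (abs_nonneg _) hMv0
  -- the rho identities
  have hGv_val : ∀ x : {p : Y × ℕ // p.2 < φ p.1}, Gv (x : Y × ℕ) = v x := by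
    intro x
    rw [hGvdef]
    exact dif_pos x.2
  have hGw_val : ∀ x : {p : Y × ℕ // p.2 < φ p.1}, Gw (x : Y × ℕ) = w x := by
    intro x
    rw [hGwdef]
    exact dif_pos x.2
  have htoRbar : ((ENNReal.ofReal bar)⁻¹).toReal = bar⁻¹ := by
    rw [ENNReal.toReal_inv, ENNReal.toReal_ofReal (by linarith)]
  have htoRbar' : ((ENNReal.ofReal bar')⁻¹).toReal = bar'⁻¹ := by
    rw [ENNReal.toReal_inv, ENNReal.toReal_ofReal (by linarith)]
  have hrho : rhoTower μ F φ hφ1 v w n = bar⁻¹ * P - (bar⁻¹ * a) * (bar⁻¹ * b) := by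
    have hcv : ∫ x, v x ∂(Measure.comap Subtype.val m) = a := by
      rw [hadef, hsdef]
      rw [← integral_comap_eq m hφm Gv]
      exact integral_congr_ae (ae_of_all _ fun x => (hGv_val x).symm)
    have hcw : ∫ x, w x ∂(Measure.comap Subtype.val m) = b := by
      rw [hbdef, hsdef]
      rw [← integral_comap_eq m hφm Gw]
      exact integral_congr_ae (ae_of_all _ fun x => (hGw_val x).symm)
    have hcp : ∫ x, v x * w ((towerMap F φ hφ1)^[n] x) ∂(Measure.comap Subtype.val m) = P := by
      rw [hPdef, hsdef]
      rw [← integral_comap_eq m hφm (fun p => Gv p * Gw ((amb F φ)^[n] p))]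
      apply integral_congr_ae (ae_of_all _ fun x => ?_)
      rw [← hGv_val x, ← val_iterate_towerMap hφ1 x n, hGw_val ((towerMap F φ hφ1)^[n] x)]
    rw [rhoTower]
    have hmu : muTower μ φ = (ENNReal.ofReal bar)⁻¹ • Measure.comap Subtype.val m := by
      rw [muTower, hbardef, hm]
    rw [hmu, integral_smul_measure, integral_smul_measure, integral_smul_measure,
      htoRbar, hcv, hcw, hcp]
    simp only [smul_eq_mul]
  have hrho' : rhoTowerTr μ F φ hφ1 k v w n =
      bar'⁻¹ * P' - (bar'⁻¹ * a') * (bar'⁻¹ * b') := by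
    have hres : ∀ (G : Y × ℕ → ℝ),
        (∫ p in {p : Y × ℕ | p.2 < φ p.1}, G p ∂(m.restrict s')) = ∫ p in s', G p ∂m := by
      intro G
      rw [Measure.restrict_restrict hs]
      congr 1
      rw [inter_eq_self_of_subset_right hss']
    have hcv : ∫ x, v x ∂(Measure.comap Subtype.val (m.restrict s')) = a' := by
      rw [ha'def]
      rw [← hres Gv, ← integral_comap_eq (m.restrict s') hφm Gv]
      exact integral_congr_ae (ae_of_all _ fun x => (hGv_val x).symm)
    have hcw : ∫ x, w x ∂(Measure.comap Subtype.val (m.restrict s')) = b' := by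
      rw [hb'def]
      rw [← hres Gw, ← integral_comap_eq (m.restrict s') hφm Gw]
      exact integral_congr_ae (ae_of_all _ fun x => (hGw_val x).symm)
    have hcp : ∫ x, v x * w ((towerMapTr F φ hφ1 k)^[n] x)
        ∂(Measure.comap Subtype.val (m.restrict s')) = P' := by
      rw [hP'def]
      rw [← hres (fun p => Gv p * Gw ((amb F ψ)^[n] p)),
        ← integral_comap_eq (m.restrict s') hφm (fun p => Gv p * Gw ((amb F ψ)^[n] p))]
      apply integral_congr_ae (ae_of_all _ fun x => ?_)
      have hval : (amb F ψ)^[n] (x : Y × ℕ) = (((towerMapTr F φ hφ1 k)^[n] x) : Y × ℕ) := by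
        rw [hψdef]
        exact (val_iterate_towerMapTr hφ1 k x n).symm
      rw [← hGv_val x, hval, hGw_val ((towerMapTr F φ hφ1 k)^[n] x)]
    rw [rhoTowerTr]
    have hmu : muTowerTr μ φ k =
        (ENNReal.ofReal bar')⁻¹ • Measure.comap Subtype.val (m.restrict s') := by
      rw [muTowerTr, hbar'def, hm, hs'def]
    rw [hmu, integral_smul_measure, integral_smul_measure, integral_smul_measure,
      htoRbar', hcv, hcw, hcp]
    simp only [smul_eq_mul]
  -- tail sums
  have hδ : bar - bar' = (μ {y | k < φ y}).toReal +
      ∑' j : ℕ, (μ {y | k + 1 + j < φ y}).toReal := by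
    have ht : ENNReal.ofReal (bar - bar') = ∑' j : ℕ, μ {y | k + j < φ y} :=
      tail_sum μ hφm hint k
    have hsum_ne : (∑' j : ℕ, μ {y | k + j < φ y}) ≠ ∞ := by
      rw [← ht]; exact ENNReal.ofReal_ne_top
    have hshift : (∑' j : ℕ, μ {y | k + j < φ y}) =
        μ {y | k < φ y} + ∑' j : ℕ, μ {y | k + 1 + j < φ y} := by
      rw [tsum_eq_zero_add' ENNReal.summable]
      have e0 : {y : Y | k + 0 < φ y} = {y : Y | k < φ y} := by
        ext y; show k + 0 < φ y ↔ k < φ y; omega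
      have e1 : ∀ j : ℕ, {y : Y | k + (j + 1) < φ y} = {y : Y | k + 1 + j < φ y} := by
        intro j; ext y; show k + (j + 1) < φ y ↔ k + 1 + j < φ y; omega
      rw [e0]
      congr 1
      exact tsum_congr fun j => by rw [e1 j]
    have h2ne : (∑' j : ℕ, μ {y | k + 1 + j < φ y}) ≠ ∞ :=
      ne_top_of_le_ne_top hsum_ne (by rw [hshift]; exact le_add_self)
    have h3 : bar - bar' = (ENNReal.ofReal (bar - bar')).toReal :=
      (ENNReal.toReal_ofReal (by linarith)).symm
    rw [h3, ht, hshift, ENNReal.toReal_add (measure_ne_top μ _) h2ne,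
      ENNReal.tsum_toReal_eq (fun j => measure_ne_top μ _)]
  -- norm bounds
  have hnorm : ∀ (t : Set (Y × ℕ)) (G : Y × ℕ → ℝ) (M : ℝ), m t ≠ ∞ → Measurable G →
      (∀ p, |G p| ≤ M) → |∫ p in t, G p ∂m| ≤ M * (m t).toReal := by
    intro t G M ht hGm hGb
    rw [← Real.norm_eq_abs]
    exact norm_setIntegral_le_of_norm_le_const (lt_top_iff_ne_top.mpr ht)
      (fun p _ => by rw [Real.norm_eq_abs]; exact hGb p)
  have htoRs : (m s).toReal = bar := by rw [hms, ENNReal.toReal_ofReal (by linarith)]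
  have htoRs' : (m s').toReal = bar' := by rw [hms', ENNReal.toReal_ofReal (by linarith)]
  have hmdiff : (m (s \ s')).toReal = bar - bar' := by
    rw [measure_diff hss' hs'.nullMeasurableSet hms'ne, hms, hms',
      ← ENNReal.ofReal_sub bar (by linarith), ENNReal.toReal_ofReal (by linarith)]
  have hmdiffne : m (s \ s') ≠ ∞ := ne_top_of_le_ne_top hmsne (measure_mono diff_subset)
  -- splitting identities
  have hsplitInt : ∀ (G : Y × ℕ → ℝ), Measurable G → (∀ p, |G p| ≤ Mv * Mw) →
      (∫ p in s, G p ∂m) - (∫ p in s', G p ∂m) = ∫ p in s \ s', G p ∂m := by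
    intro G hGm hGb
    have h1 : (∫ p in s, G p ∂m) = (∫ p in s', G p ∂m) + ∫ p in s \ s', G p ∂m := by
      rw [← setIntegral_union disjoint_sdiff_self_right (hs.diff hs')
        (hIntOn s' hms'ne G (Mv * Mw) hGm hGb)
        (hIntOn _ hmdiffne G (Mv * Mw) hGm hGb), union_diff_cancel hss']
    linarith
  have ha' : |a'| ≤ Mv * bar' := by
    have h2 : ∀ p, |Gv p| ≤ Mv * Mw ∨ True := fun p => Or.inr trivial
    have := hnorm s' Gv Mv hms'ne hGvm hGvb
    rwa [htoRs'] at this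
  have hb : |b| ≤ Mw * bar := by
    have := hnorm s Gw Mw hmsne hGwm hGwb
    rwa [htoRs] at this
  have hb' : |b'| ≤ Mw * bar' := by
    have := hnorm s' Gw Mw hms'ne hGwm hGwb
    rwa [htoRs'] at this
  have hP' : |P'| ≤ Mv * Mw * bar' := by
    have := hnorm s' (fun p => Gv p * Gw ((amb F ψ)^[n] p)) (Mv * Mw) hms'ne
      (by exact hGvm.mul (hGwm.comp (hambψ.iterate n))) (hprodb ((amb F ψ)^[n]))
    rwa [htoRs'] at this
  have hPQ : |P - Q| ≤ Mv * Mw * (bar - bar') := by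
    rw [hPdef, hQdef, hsplitInt (fun p => Gv p * Gw ((amb F φ)^[n] p))
      (by exact hGvm.mul (hGwm.comp (hambφ.iterate n))) (hprodb ((amb F φ)^[n]))]
    have := hnorm (s \ s') (fun p => Gv p * Gw ((amb F φ)^[n] p)) (Mv * Mw) hmdiffne
      (by exact hGvm.mul (hGwm.comp (hambφ.iterate n))) (hprodb ((amb F φ)^[n]))
    rwa [hmdiff] at this
  have haa' : |a - a'| ≤ Mv * (bar - bar') := by
    have h1 : a - a' = ∫ p in s \ s', Gv p ∂m := by
      rw [hadef, ha'def]
      have h2 : (∫ p in s, Gv p ∂m) = (∫ p in s', Gv p ∂m) + ∫ p in s \ s', Gv p ∂m := by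
        rw [← setIntegral_union disjoint_sdiff_self_right (hs.diff hs')
          (hIntOn s' hms'ne Gv Mv hGvm hGvb)
          (hIntOn _ hmdiffne Gv Mv hGvm hGvb), union_diff_cancel hss']
      linarith
    rw [h1]
    have := hnorm (s \ s') Gv Mv hmdiffne hGvm hGvb
    rwa [hmdiff] at this
  have hbb' : |b - b'| ≤ Mw * (bar - bar') := by
    have h1 : b - b' = ∫ p in s \ s', Gw p ∂m := by
      rw [hbdef, hb'def]
      have h2 : (∫ p in s, Gw p ∂m) = (∫ p in s', Gw p ∂m) + ∫ p in s \ s', Gw p ∂m := by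
        rw [← setIntegral_union disjoint_sdiff_self_right (hs.diff hs')
          (hIntOn s' hms'ne Gw Mw hGwm hGwb)
          (hIntOn _ hmdiffne Gw Mw hGwm hGwb), union_diff_cancel hss']
      linarith
    rw [h1]
    have := hnorm (s \ s') Gw Mw hmdiffne hGwm hGwb
    rwa [hmdiff] at this
  have hQP' : |Q - P'| ≤ 2 * (Mv * Mw) * ((n : ℝ) * (μ {y | k < φ y}).toReal) := by
    set D : Set (Y × ℕ) := {q | q.2 + 1 = k ∧ k < φ q.1} with hDdef
    have hD : MeasurableSet D := by
      have h1 : D = (Prod.snd ⁻¹' {ℓ : ℕ | ℓ + 1 = k}) ∩ ((fun q : Y × ℕ => φ q.1) ⁻¹' Ioi k) :=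
        rfl
      rw [h1]
      exact (measurable_snd (show MeasurableSet {ℓ : ℕ | ℓ + 1 = k} from trivial)).inter
        ((hφm.comp measurable_fst) measurableSet_Ioi)
    have hDs' : D ⊆ s' := by
      intro q hq
      rw [hDdef] at hq
      obtain ⟨h1, h2⟩ := hq
      show q.2 < min (φ q.1) k
      exact lt_min (by omega) (by omega)
    have hmD : m D = μ {y | k < φ y} := by
      have h1 : D = {y | k < φ y} ×ˢ ({k - 1} : Set ℕ) := by
        rw [hDdef]; ext ⟨y, ℓ⟩
        simp only [mem_setOf_eq, mem_prod, mem_singleton_iff]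
        omega
      rw [h1, hm, Measure.prod_prod, Measure.count_singleton, mul_one]
    set U : Set (Y × ℕ) := ⋃ i ∈ Finset.range n, ((amb F ψ)^[i]) ⁻¹' D with hUdef
    have hU : MeasurableSet U :=
      MeasurableSet.biUnion (Finset.range n).countable_toSet
        (fun i _ => (hambψ.iterate i) hD)
    have hsets : {p : Y × ℕ | p.2 < ψ p.1} = s' := rfl
    have hmp : MeasurePreserving (amb F ψ) (m.restrict s') (m.restrict s') := by
      have := amb_measurePreserving μ hF hψm hψ1
      rwa [hsets] at this
    have hrs'D : (m.restrict s') D = μ {y | k < φ y} := by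
      rw [Measure.restrict_apply hD, inter_eq_self_of_subset_left hDs', hmD]
    have hmU : (m.restrict s') U ≤ (n : ℝ≥0∞) * μ {y | k < φ y} := by
      calc (m.restrict s') U ≤ ∑ i ∈ Finset.range n, (m.restrict s') (((amb F ψ)^[i]) ⁻¹' D) :=
            measure_biUnion_finset_le _ _
        _ = ∑ i ∈ Finset.range n, μ {y | k < φ y} := by
            refine Finset.sum_congr rfl fun i _ => ?_
            rw [(hmp.iterate i).measure_preimage hD.nullMeasurableSet, hrs'D]
        _ = (n : ℝ≥0∞) * μ {y | k < φ y} := by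
            rw [Finset.sum_const, Finset.card_range, nsmul_eq_mul]
    have hs'U : m (s' ∩ U) ≤ (n : ℝ≥0∞) * μ {y | k < φ y} := by
      rw [inter_comm, ← Measure.restrict_apply hU]
      exact hmU
    have hs'Une : m (s' ∩ U) ≠ ∞ :=
      ne_top_of_le_ne_top hms'ne (measure_mono inter_subset_left)
    -- the integrand
    set h : Y × ℕ → ℝ := fun p => Gv p * Gw ((amb F φ)^[n] p) - Gv p * Gw ((amb F ψ)^[n] p)
      with hhdef
    have hhm : Measurable h := by
      exact (hGvm.mul (hGwm.comp (hambφ.iterate n))).sub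
        (hGvm.mul (hGwm.comp (hambψ.iterate n)))
    have hhb : ∀ p, |h p| ≤ Mv * Mw + Mv * Mw := by
      intro p
      rw [hhdef]
      exact (abs_sub _ _).trans (add_le_add (hprodb _ p) (hprodb _ p))
    have hQP'eq : Q - P' = ∫ p in s', h p ∂m := by
      rw [hQdef, hP'def, hhdef, ← integral_sub
        (hIntOn s' hms'ne _ (Mv * Mw) (by exact hGvm.mul (hGwm.comp (hambφ.iterate n)))
          (hprodb ((amb F φ)^[n])))
        (hIntOn s' hms'ne _ (Mv * Mw) (by exact hGvm.mul (hGwm.comp (hambψ.iterate n)))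
          (hprodb ((amb F ψ)^[n])))]
    have hzero : ∀ p ∈ s' \ U, h p = 0 := by
      rintro p ⟨hp1, hp2⟩
      have hnotD : ∀ i, i < n → ((amb F ψ)^[i] p) ∉ D := by
        intro i hi hconD
        apply hp2
        rw [hUdef]
        exact mem_biUnion (Finset.mem_coe.mpr (Finset.mem_range.mpr hi)) hconD
      have hagree := iterate_agree (F := F) hφ1 hk
        (show p.2 < min (φ p.1) k from hp1) (by
          intro i hi
          have := hnotD i hi
          rwa [hψdef] at this)
      rw [hhdef]
      dsimp only
      rw [show (amb F φ)^[n] p = (amb F ψ)^[n] p from by rw [hψdef]; exact hagree, sub_self]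
    have hsplit2 : ∫ p in s', h p ∂m = ∫ p in s' ∩ U, h p ∂m := by
      have hd : Disjoint (s' ∩ U) (s' \ U) := disjoint_sdiff_self_right.mono_left
        inter_subset_right
      have hu := setIntegral_union (μ := m) (f := h) hd ((hs'.diff hU))
        (hIntOn _ hs'Une h _ hhm hhb)
        (hIntOn _ (ne_top_of_le_ne_top hms'ne (measure_mono diff_subset)) h _ hhm hhb)
      rw [inter_union_diff] at hu
      rw [hu, setIntegral_eq_zero_of_forall_eq_zero hzero, add_zero]
    have hfinal := hnorm (s' ∩ U) h (Mv * Mw + Mv * Mw) hs'Une hhm hhb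
    rw [hQP'eq, hsplit2]
    refine hfinal.trans ?_
    have htr : (m (s' ∩ U)).toReal ≤ (n : ℝ) * (μ {y | k < φ y}).toReal := by
      have := ENNReal.toReal_mono (by
          exact ENNReal.mul_ne_top (ENNReal.natCast_ne_top n) (measure_ne_top μ _)) hs'U
      rwa [ENNReal.toReal_mul, ENNReal.toReal_natCast] at this
    calc (Mv * Mw + Mv * Mw) * (m (s' ∩ U)).toReal
        ≤ (Mv * Mw + Mv * Mw) * ((n : ℝ) * (μ {y | k < φ y}).toReal) := by
          apply mul_le_mul_of_nonneg_left htr (by positivity)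
      _ = 2 * (Mv * Mw) * ((n : ℝ) * (μ {y | k < φ y}).toReal) := by ring
  rw [hrho, hrho']
  exact arith hbar'1 hbarle hδ hMv0 hMw0
    (tsum_nonneg fun j => ENNReal.toReal_nonneg)
    ENNReal.toReal_nonneg (by exact_mod_cast hn) ha' hb hb' hP' hPQ hQP' haa' hbb'

end Stmt16Aux

/-- Corollary A.3.  There is a universal constant `C > 0` such that for any
probability space `(Y,μ)`, measure preserving `F`, integrable `φ ≥ 1`, tower `(Δ,f,μ_Δ)` and
truncated tower `(Δ',f',μ_{Δ'})` of height `φ' = min(φ,k)`, and all `v, w ∈ L^∞(Δ)`,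
`|ρ_{v,w}(n) - ρ'_{v,w}(n)| ≤ C |v|_∞ |w|_∞ (∑_{j>k} μ(φ>j) + n μ(φ>k))` for all `k, n ≥ 1`. -/
theorem stmt_16 :
    ∃ C : ℝ, 0 < C ∧
      ∀ (Y : Type u) [MeasurableSpace Y] (μ : Measure Y) [IsProbabilityMeasure μ]
        (F : Y → Y), MeasurePreserving F μ μ →
        ∀ (φ : Y → ℕ) (hφ1 : ∀ y, 1 ≤ φ y), Measurable φ →
          Integrable (fun y => (φ y : ℝ)) μ →
          ∀ (v w : {p : Y × ℕ // p.2 < φ p.1} → ℝ) (Mv Mw : ℝ),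
            Measurable v → Measurable w →
            (∀ x, |v x| ≤ Mv) → (∀ x, |w x| ≤ Mw) →
            ∀ k n : ℕ, 1 ≤ k → 1 ≤ n →
              |rhoTower μ F φ hφ1 v w n - rhoTowerTr μ F φ hφ1 k v w n| ≤
                C * Mv * Mw *
                  ((∑' j : ℕ, (μ {y | k + 1 + j < φ y}).toReal) +
                    (n : ℝ) * (μ {y | k < φ y}).toReal) := by
  refine ⟨8, by norm_num, ?_⟩
  intro Y _ μ _ F hF φ hφ1 hφm hint v w Mv Mw hv hw hvb hwb k n hk hn
  exact Stmt16Aux.master μ F hF φ hφ1 hφm hint v w Mv Mw hv hw hvb hwb k n hk hn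
end
end

section
/- For every q ∈ (0,1] there exists a constant C = C(q) > 0 with the following property. Let X be a complex Banach space, a > 0, S ≥ 0, and let H be analytic on the disk D = {z ∈ ℂ : |z| < e^a} with values in X, with power series H(z) = Σ_{n≥0} H_n zⁿ (H_n ∈ X) converging on D. If ‖H(z)‖ ≤ S |z−1|^{q−1} for all z ∈ D with z ≠ 1, then ‖H_n‖ ≤ C S e^{−n a} for all n ≥ 0. -/
universe u


open Real Set MeasureTheory intervalIntegral

-- integrability of |x - c|^p for p > -1
lemma aux_abs_rpow_integrable {p : ℝ} (hp : -1 < p) (c a b : ℝ) :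
    IntervalIntegrable (fun x => |x - c| ^ p) volume a b := by
  have base : ∀ d : ℝ, IntervalIntegrable (fun x => |x| ^ p) volume 0 d := by
    have pos : ∀ d : ℝ, 0 ≤ d → IntervalIntegrable (fun x => |x| ^ p) volume 0 d := by
      intro d hd
      have h := intervalIntegrable_rpow' (a := 0) (b := d) hp
      rw [intervalIntegrable_iff] at h ⊢
      refine h.congr_fun ?_ measurableSet_uIoc
      intro x hx
      rw [uIoc_of_le hd] at hx
      simp only []
      rw [abs_of_pos hx.1]
    intro d
    rcases le_total 0 d with hd | hd
    · exact pos d hd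
    · have h := pos (-d) (by linarith)
      rw [IntervalIntegrable.iff_comp_neg] at h
      simpa using h
  have h2 : IntervalIntegrable (fun x => |x| ^ p) volume (a - c) (b - c) :=
    ((base (a - c)).symm.trans (base (b - c)))
  simpa using h2.comp_sub_right c

-- rpow comparison
lemma aux_rpow_le {p y t : ℝ} (hp : p ≤ 0) (ht : 0 ≤ t) (hty : t ≤ y)
    (h0 : t = 0 → y = 0) : y ^ p ≤ t ^ p := by
  rcases eq_or_lt_of_le ht with h | h
  · rw [h0 h.symm, h.symm]
  · exact Real.rpow_le_rpow_of_nonpos h hty hp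

-- the dominating function
noncomputable def gdom (p : ℝ) (θ : ℝ) : ℝ :=
  (2 / π * |θ|) ^ p + (2 / π * |θ - π|) ^ p + (2 / π * |θ - 2 * π|) ^ p

lemma gdom_nonneg (p θ : ℝ) : 0 ≤ gdom p θ := by
  unfold gdom
  have h : (0:ℝ) ≤ 2 / π := by positivity
  positivity

lemma gdom_integrable {p : ℝ} (hp : -1 < p) : IntervalIntegrable (gdom p) volume 0 (2 * π) := by
  have h2 : (0:ℝ) ≤ 2 / π := by positivity
  have key : ∀ c : ℝ, IntervalIntegrable (fun θ => (2 / π * |θ - c|) ^ p) volume 0 (2 * π) := by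
    intro c
    have := (aux_abs_rpow_integrable hp c 0 (2 * π)).const_mul ((2 / π) ^ p)
    refine this.congr ?_
    intro θ _
    exact (Real.mul_rpow h2 (abs_nonneg _)).symm
  exact ((key 0).add (key π)).add (key (2 * π)) |>.congr (by
    intro θ _
    simp [gdom])

-- Jordan-type bound: on [0, 2π], |sin θ| ^ p ≤ gdom p θ for p ≤ 0
lemma sin_rpow_le_gdom {p : ℝ} (hp : p ≤ 0) {θ : ℝ} (hθ : θ ∈ Icc 0 (2 * π)) :
    |Real.sin θ| ^ p ≤ gdom p θ := by
  have hπ := Real.pi_pos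
  have h2 : (0:ℝ) ≤ 2 / π := by positivity
  have key : ∀ c : ℝ, Real.sin c = 0 → 2 / π * |θ - c| ≤ |Real.sin θ| →
      |Real.sin θ| ^ p ≤ (2 / π * |θ - c|) ^ p := by
    intro c hc hle
    refine aux_rpow_le hp (by positivity) hle ?_
    intro h0
    have : θ = c := by
      have : |θ - c| = 0 := by
        by_contra hne
        have : 0 < |θ - c| := lt_of_le_of_ne (abs_nonneg _) (Ne.symm hne)
        nlinarith [div_pos (by norm_num : (0:ℝ) < 2) hπ]
      have := abs_eq_zero.mp this
      linarith
    rw [this, hc, abs_zero]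
  have nn0 : 0 ≤ (2 / π * |θ|) ^ p := Real.rpow_nonneg (by positivity) _
  have nnπ : 0 ≤ (2 / π * |θ - π|) ^ p := Real.rpow_nonneg (by positivity) _
  have nn2π : 0 ≤ (2 / π * |θ - 2 * π|) ^ p := Real.rpow_nonneg (by positivity) _
  obtain ⟨h0, h2π⟩ := hθ
  unfold gdom
  rcases le_total θ (π / 2) with hA | hA
  · -- θ ∈ [0, π/2]
    have hs : 2 / π * |θ - 0| ≤ |Real.sin θ| := by
      rw [sub_zero, abs_of_nonneg h0, abs_of_nonneg (Real.sin_nonneg_of_nonneg_of_le_pi h0 (by linarith))]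
      exact Real.mul_le_sin h0 hA
    have hk := key 0 Real.sin_zero hs
    rw [sub_zero] at hk
    linarith
  rcases le_total θ π with hB | hB
  · -- θ ∈ [π/2, π]
    have hs : 2 / π * |θ - π| ≤ |Real.sin θ| := by
      rw [abs_sub_comm, abs_of_nonneg (by linarith),
        abs_of_nonneg (Real.sin_nonneg_of_nonneg_of_le_pi h0 hB)]
      have := Real.mul_le_sin (x := π - θ) (by linarith) (by linarith)
      rwa [Real.sin_pi_sub] at this
    linarith [key π Real.sin_pi hs]
  rcases le_total θ (3 * π / 2) with hC | hC
  · -- θ ∈ [π, 3π/2]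
    have hs : 2 / π * |θ - π| ≤ |Real.sin θ| := by
      have hsin : Real.sin θ ≤ 0 := by
        have := Real.sin_nonneg_of_nonneg_of_le_pi (x := θ - π) (by linarith) (by linarith)
        rwa [Real.sin_sub_pi, neg_nonneg] at this
      rw [abs_of_nonneg (by linarith), abs_of_nonpos hsin]
      have := Real.mul_le_sin (x := θ - π) (by linarith) (by linarith)
      rw [Real.sin_sub_pi] at this
      linarith
    linarith [key π Real.sin_pi hs]
  · -- θ ∈ [3π/2, 2π]
    have hs : 2 / π * |θ - 2 * π| ≤ |Real.sin θ| := by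
      have hsin : Real.sin θ ≤ 0 := by
        have := Real.sin_nonneg_of_nonneg_of_le_pi (x := 2 * π - θ) (by linarith) (by linarith)
        rw [Real.sin_sub, Real.sin_two_pi, Real.cos_two_pi] at this
        simpa using this
      rw [abs_sub_comm, abs_of_nonneg (by linarith), abs_of_nonpos hsin]
      have := Real.mul_le_sin (x := 2 * π - θ) (by linarith) (by linarith)
      rw [Real.sin_sub, Real.sin_two_pi, Real.cos_two_pi] at this
      simpa using this
    linarith [key (2 * π) Real.sin_two_pi hs]

lemma sin_zero_null : volume {θ : ℝ | Real.sin θ = 0} = 0 := by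
  have : {θ : ℝ | Real.sin θ = 0} ⊆ Set.range (fun n : ℤ => (n : ℝ) * π) := by
    intro θ hθ
    obtain ⟨n, hn⟩ := Real.sin_eq_zero_iff.mp hθ
    exact ⟨n, hn⟩
  exact measure_mono_null this (Set.Countable.measure_zero (Set.countable_range _) _)

open Filter Topology Metric
open scoped NNReal ENNReal

/-- For every `q ∈ (0,1]` there exists `C = C(q) > 0` with the following
property.  Let `X` be a complex Banach space, `a > 0`, `S ≥ 0`, and let `H` be analytic on the
disk `D = {|z| < e^a}` with values in `X`, given by a power series `H(z) = ∑ₙ Hₙ zⁿ` converging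
on `D`.  If `‖H(z)‖ ≤ S |z-1|^{q-1}` for all `z ∈ D`, `z ≠ 1`, then `‖Hₙ‖ ≤ C S e^{-na}` for
all `n ≥ 0`. -/
theorem stmt_18 :
    ∀ q : ℝ, 0 < q → q ≤ 1 →
      ∃ C : ℝ, 0 < C ∧
        ∀ (X : Type u) [NormedAddCommGroup X] [NormedSpace ℂ X] [CompleteSpace X],
          ∀ a S : ℝ, 0 < a → 0 ≤ S →
            ∀ (Hc : ℕ → X) (H : ℂ → X),
              (∀ z : ℂ, ‖z‖ < Real.exp a → HasSum (fun n : ℕ => z ^ n • Hc n) (H z)) →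
              (∀ z : ℂ, ‖z‖ < Real.exp a → z ≠ 1 → ‖H z‖ ≤ S * ‖z - 1‖ ^ (q - 1)) →
              ∀ n : ℕ, ‖Hc n‖ ≤ C * S * Real.exp (-(n : ℝ) * a) := by
  intro q hq hq1
  have hπ := Real.pi_pos
  set p := q - 1 with hpdef
  have hp0 : p ≤ 0 := by simp [hpdef]; linarith
  have hp1 : -1 < p := by simp [hpdef]; linarith
  set J := ∫ θ in (0:ℝ)..(2*π), gdom p θ with hJdef
  have hJ0 : 0 ≤ J :=
    intervalIntegral.integral_nonneg (by positivity) (fun θ _ => gdom_nonneg p θ)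
  refine ⟨(2*π)⁻¹ * J + 1, by positivity, ?_⟩
  intro X _ _ _ a S ha hS Hc H hsum hbound n
  set R := Real.exp a with hRdef
  have hR0 : 0 < R := Real.exp_pos a
  have hR1 : 1 < R := by
    calc (1:ℝ) = Real.exp 0 := (Real.exp_zero).symm
    _ < Real.exp a := Real.exp_lt_exp.2 ha
  -- the formal power series with coefficients Hc
  set P : FormalMultilinearSeries ℂ ℂ X :=
    (fun m => ContinuousMultilinearMap.mkPiRing ℂ (Fin m) (Hc m)) with hPdef
  have hPapp : ∀ (m : ℕ) (y : ℂ), (P m fun _ => y) = y ^ m • Hc m := by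
    intro m y
    simp [hPdef]
  have hPnorm : ∀ m, ‖P m‖ = ‖Hc m‖ := by
    intro m
    simp [hPdef]
  have memball : ∀ y : ℂ, y ∈ Metric.eball (0:ℂ) (ENNReal.ofReal R) ↔ ‖y‖ < R := by
    intro y
    rw [Metric.mem_eball, edist_dist, dist_zero_right,
      ENNReal.ofReal_lt_ofReal_iff hR0]
  have hps : HasFPowerSeriesOnBall H P 0 (ENNReal.ofReal R) := by
    refine ⟨?_, ENNReal.ofReal_pos.2 hR0, ?_⟩
    · refine ENNReal.le_of_forall_nnreal_lt ?_
      intro r hr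
      have hrR : (r:ℝ) < R := by
        rwa [← ENNReal.ofReal_coe_nnreal, ENNReal.ofReal_lt_ofReal_iff hR0] at hr
      have hsum' := hsum ((r:ℝ):ℂ) (by simpa using hrR)
      have h0 := tendsto_zero_iff_norm_tendsto_zero.mp hsum'.summable.tendsto_atTop_zero
      refine P.le_radius_of_tendsto (l := 0) (h0.congr ?_)
      intro m
      rw [norm_smul, norm_pow, hPnorm, mul_comm]
      norm_num
    · intro y hy
      rw [zero_add]
      have h := hsum y ((memball y).1 hy)
      simpa only [hPapp] using h
  -- per-radius coefficient estimate
  have main : ∀ r : ℝ, 1 < r → r < R →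
      ‖Hc n‖ ≤ ((2*π)⁻¹ * (S * J)) * (r⁻¹)^n := by
    intro r h1 hrR
    have hr0 : (0:ℝ) < r := by linarith
    set rn : ℝ≥0 := ⟨r, hr0.le⟩ with hrn
    have hrnc : (rn : ℝ) = r := rfl
    have hdiff : DifferentiableOn ℂ H (Metric.closedBall (0:ℂ) rn) := by
      apply hps.differentiableOn.mono
      intro z hz
      rw [memball]
      rw [Metric.mem_closedBall, dist_zero_right] at hz
      calc ‖z‖ ≤ r := by exact_mod_cast hz
        _ < R := hrR
    have hcb := hdiff.hasFPowerSeriesOnBall (by exact_mod_cast hr0 : 0 < rn)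
    have huniq : P = cauchyPowerSeries H 0 rn :=
      hps.hasFPowerSeriesAt.eq_formalMultilinearSeries hcb.hasFPowerSeriesAt
    have hb := norm_cauchyPowerSeries_le H 0 (rn:ℝ) n
    -- integrability of θ ↦ ‖H (circleMap 0 r θ)‖
    have hfc : Continuous fun θ : ℝ => ‖H (circleMap 0 r θ)‖ := by
      refine (hdiff.continuousOn.comp_continuous (continuous_circleMap 0 r) ?_).norm
      intro θ
      exact circleMap_mem_closedBall 0 hr0.le θ
    have hfi : IntervalIntegrable (fun θ : ℝ => ‖H (circleMap 0 r θ)‖) volume 0 (2*π) :=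
      hfc.intervalIntegrable 0 (2*π)
    have hgi : IntervalIntegrable (fun θ => S * gdom p θ) volume 0 (2*π) :=
      (gdom_integrable hp1).const_mul S
    have hae : ∀ᵐ θ ∂(volume.restrict (Icc 0 (2*π))),
        ‖H (circleMap 0 r θ)‖ ≤ S * gdom p θ := by
      have hz : ∀ᵐ θ : ℝ ∂volume, Real.sin θ ≠ 0 := by
        rw [ae_iff]
        simpa using sin_zero_null
      filter_upwards [ae_restrict_of_ae hz, ae_restrict_mem measurableSet_Icc] with θ hθ hmem
      set z := circleMap 0 r θ with hzdef
      have hzn : ‖z‖ = r := by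
        rw [hzdef, norm_circleMap_zero, abs_of_pos hr0]
      have hz1 : z ≠ 1 := by
        intro h
        rw [h] at hzn
        simp at hzn
        linarith
      have hb1 := hbound z (by rw [hzn]; exact hrR) hz1
      have him : |Real.sin θ| ≤ ‖z - 1‖ := by
        have himz : (z - 1).im = r * Real.sin θ := by
          simp [hzdef, circleMap, Complex.exp_ofReal_mul_I_im]
        calc |Real.sin θ| = 1 * |Real.sin θ| := (one_mul _).symm
          _ ≤ r * |Real.sin θ| := by
              apply mul_le_mul_of_nonneg_right (le_of_lt h1) (abs_nonneg _)
          _ = |r * Real.sin θ| := by rw [abs_mul, abs_of_pos hr0]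
          _ = |(z - 1).im| := by rw [himz]
          _ ≤ ‖z - 1‖ := Complex.abs_im_le_norm _
          _ = ‖z - 1‖ := rfl
      have hsinpos : 0 < |Real.sin θ| := abs_pos.2 hθ
      have h2 : ‖z - 1‖ ^ p ≤ |Real.sin θ| ^ p :=
        aux_rpow_le hp0 (abs_nonneg _) him (fun h => absurd h hsinpos.ne')
      have h3 := sin_rpow_le_gdom hp0 hmem
      calc ‖H z‖ ≤ S * ‖z - 1‖ ^ p := hb1
        _ ≤ S * gdom p θ := mul_le_mul_of_nonneg_left (h2.trans h3) hS
    have hint : (∫ θ in (0:ℝ)..(2*π), ‖H (circleMap 0 r θ)‖) ≤ S * J := by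
      have := intervalIntegral.integral_mono_ae_restrict (by positivity) hfi hgi hae
      rwa [intervalIntegral.integral_const_mul] at this
    have hInonneg : (0:ℝ) ≤ ∫ θ in (0:ℝ)..(2*π), ‖H (circleMap 0 r θ)‖ :=
      intervalIntegral.integral_nonneg (by positivity) (fun θ _ => norm_nonneg _)
    calc ‖Hc n‖ = ‖P n‖ := (hPnorm n).symm
      _ = ‖cauchyPowerSeries H 0 (rn:ℝ) n‖ := by rw [huniq]
      _ ≤ ((2*π)⁻¹ * ∫ θ in (0:ℝ)..(2*π), ‖H (circleMap 0 (rn:ℝ) θ)‖) * |(rn:ℝ)|⁻¹ ^ n := hb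
      _ = ((2*π)⁻¹ * ∫ θ in (0:ℝ)..(2*π), ‖H (circleMap 0 r θ)‖) * (r⁻¹) ^ n := by
          rw [hrnc, abs_of_pos hr0, inv_pow, ← inv_pow]
      _ ≤ ((2*π)⁻¹ * (S * J)) * (r⁻¹) ^ n := by
          apply mul_le_mul_of_nonneg_right _ (by positivity)
          apply mul_le_mul_of_nonneg_left hint (by positivity)
  -- take the limit r → R⁻
  have tend : Tendsto (fun r : ℝ => ((2*π)⁻¹ * (S * J)) * (r⁻¹)^n) (𝓝[<] R)
      (𝓝 (((2*π)⁻¹ * (S * J)) * (R⁻¹)^n)) := by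
    apply Tendsto.mono_left _ nhdsWithin_le_nhds
    exact (((continuousAt_inv₀ hR0.ne').pow n).const_mul _)
  have hev : ∀ᶠ r in 𝓝[<] R, ‖Hc n‖ ≤ ((2*π)⁻¹ * (S * J)) * (r⁻¹)^n := by
    filter_upwards [self_mem_nhdsWithin,
      (eventually_gt_nhds hR1).filter_mono nhdsWithin_le_nhds] with r hr h1
    exact main r h1 hr
  have hfin := ge_of_tendsto tend hev
  have hRinv : (R⁻¹)^n = Real.exp (-(n:ℝ) * a) := by
    rw [hRdef, ← Real.exp_neg, ← Real.exp_nat_mul]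
    ring_nf
  rw [hRinv] at hfin
  have hexp : 0 < Real.exp (-(n:ℝ) * a) := Real.exp_pos _
  calc ‖Hc n‖ ≤ ((2*π)⁻¹ * (S * J)) * Real.exp (-(n:ℝ) * a) := hfin
    _ ≤ ((2*π)⁻¹ * J + 1) * S * Real.exp (-(n:ℝ) * a) := by
        apply mul_le_mul_of_nonneg_right _ hexp.le
        nlinarith [mul_nonneg hS hJ0]
end
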